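/- arXiv:2009.08117 — 6 statements merged into one kernel-verified Lean document; each statement's English description precedes it below -/
import Mathlib

section
/- For any graph G and any integer k with χ(G) ≤ k ≤ achr(G), there exists a proper complete vertex colouring of G using exactly k colours. -/
/-- A proper complete vertex colouring: proper, uses every colour of `C`,
and every pair of distinct colours appears on the endpoints of some edge. -/
def IsProperComplete {V C : Type*} (G : SimpleGraph V) (f : V → C) : Prop :=
  (∀ v w, G.Adj v w → f v ≠ f w) ∧
  Function.Surjective f ∧
  ∀ c₁ c₂ : C, c₁ ≠ c₂ → ∃ v w, G.Adj v w ∧ f v = c₁ ∧ f w = c₂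

/-- The achromatic number: the maximum number of colours in a proper complete
vertex colouring. -/
noncomputable def achr {V : Type*} (G : SimpleGraph V) : ℕ :=
  sSup {n : ℕ | ∃ f : V → Fin n, IsProperComplete G f}

/-- A proper colouring with `m+1` colours avoiding one colour gives `m`-colourability. -/
lemma avoid_colorable {V : Type*} (G : SimpleGraph V) (m : ℕ)
    (h : V → Fin (m + 1)) (hp : ∀ v w, G.Adj v w → h v ≠ h w)
    (c : Fin (m + 1)) (hc : ∀ x, h x ≠ c) : G.Colorable m := by
  classical
  have hlast : ∀ x, Equiv.swap c (Fin.last m) (h x) ≠ Fin.last m := by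
    intro x hx
    apply hc x
    have := (Equiv.swap c (Fin.last m)).injective (a₁ := h x) (a₂ := c)
    apply this
    rw [hx, Equiv.swap_apply_left]
  refine ⟨SimpleGraph.Coloring.mk
    (fun x => (Equiv.swap c (Fin.last m) (h x)).castPred (hlast x)) ?_⟩
  intro v w hadj heq
  rw [Fin.castPred_inj] at heq
  exact hp v w hadj ((Equiv.swap c (Fin.last m)).injective heq)

/-- Any proper colouring with the minimum number of colours is complete. -/
lemma minimal_complete {V : Type*} (G : SimpleGraph V) (m : ℕ)
    (hc : G.Colorable (m + 1)) (hnc : ¬ G.Colorable m) :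
    ∃ g : V → Fin (m + 1), IsProperComplete G g := by
  classical
  obtain ⟨C⟩ := hc
  have hCp : ∀ v w, G.Adj v w → C v ≠ C w := fun v w h => C.valid h
  refine ⟨C, hCp, ?_, ?_⟩
  · by_contra hs
    rw [Function.Surjective] at hs
    push_neg at hs
    obtain ⟨c, hcx⟩ := hs
    exact hnc (avoid_colorable G m C hCp c hcx)
  · intro c₁ c₂ hne
    by_contra hno
    push_neg at hno
    set h1 : V → Fin (m + 1) := fun x => if C x = c₂ then c₁ else C x with hh1
    have hp : ∀ v w, G.Adj v w → h1 v ≠ h1 w := by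
      intro v w hadj heq
      by_cases hv : C v = c₂ <;> by_cases hw : C w = c₂ <;>
        simp only [hh1, hv, hw, if_pos, if_neg, if_true, if_false] at heq
      · exact hCp v w hadj (hv.trans hw.symm)
      · exact hno w v hadj.symm heq.symm hv
      · exact hno v w hadj heq hw
      · exact hCp v w hadj heq
    have havoid : ∀ x, h1 x ≠ c₂ := by
      intro x
      by_cases hx : C x = c₂ <;> simp only [hh1, hx, if_pos, if_neg, if_true, if_false]
      · exact hne
      · exact hx
    exact hnc (avoid_colorable G m h1 hp c₂ havoid)

universe u

/-- Main induction: from a complete `n`-colouring and `k`-colourability with `k ≤ n`,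
get a complete `k`-colouring.  Induction on the number of vertices. -/
lemma interpolation_aux : ∀ (N : ℕ) {V : Type u} [Fintype V] (G : SimpleGraph V),
    Fintype.card V = N → ∀ (n k : ℕ) (f : V → Fin n), IsProperComplete G f →
    G.Colorable k → k ≤ n → ∃ g : V → Fin k, IsProperComplete G g := by
  classical
  intro N
  induction N using Nat.strong_induction_on with
  | _ N IH =>
    intro V _ G hcard n k f hf hcol hkn
    obtain ⟨hfp, hfs, hfc⟩ := hf
    match k, hcol with
    | 0, ⟨C⟩ =>
      exact ⟨C, fun v w h => C.valid h, fun b => b.elim0, fun c₁ => c₁.elim0⟩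
    | (m + 1), hcol =>
      by_cases hB : G.Colorable m
      case neg => exact minimal_complete G m hcol hB
      case pos =>
        have hninj : ¬ Function.Injective f := by
          intro hinj
          have hadj : ∀ x y : V, x ≠ y → G.Adj x y := by
            intro x y hxy
            have hne : f x ≠ f y := fun h => hxy (hinj h)
            obtain ⟨a, b, hab, ha, hb⟩ := hfc (f x) (f y) hne
            have hax : a = x := hinj ha
            have hby : b = y := hinj hb
            rwa [hax, hby] at hab
          obtain ⟨D⟩ := hB
          have hDinj : Function.Injective D := by
            intro x y hxy
            by_contra hne
            exact D.valid (hadj x y hne) hxy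
          have h1 : Fintype.card V ≤ m := by
            simpa using Fintype.card_le_of_injective D hDinj
          have h2 : n ≤ Fintype.card V := by
            simpa using Fintype.card_le_of_surjective f hfs
          omega
        obtain ⟨u, v, huv, hneq⟩ := Function.not_injective_iff.mp hninj
        have hvu : v ≠ u := fun h => hneq h.symm
        have hnadj : ¬ G.Adj u v := fun h => hfp u v h huv
        set π : V → {x : V // x ≠ u} := fun x => if hx : x = u then ⟨v, hvu⟩ else ⟨x, hx⟩
          with hπ
        have hπval : ∀ (x : V) (hx : x ≠ u), π x = ⟨x, hx⟩ := fun x hx => dif_neg hx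
        have hπu : π u = ⟨v, hvu⟩ := dif_pos rfl
        have hfπ : ∀ x, f (π x).1 = f x := by
          intro x
          by_cases hx : x = u
          · subst hx; rw [hπu]; exact huv.symm
          · rw [hπval x hx]
        have hπsurj : Function.Surjective π :=
          fun a => ⟨a.1, by rw [hπval a.1 a.2]⟩
        have hπeq : ∀ x y, π x = π y → x = y ∨ (x = u ∧ y = v) ∨ (x = v ∧ y = u) := by
          intro x y hxy
          by_cases hx : x = u <;> by_cases hy : y = u
          · left; rw [hx, hy]
          · subst hx
            rw [hπu, hπval y hy] at hxy
            right; left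
            exact ⟨rfl, (Subtype.ext_iff.mp hxy).symm⟩
          · subst hy
            rw [hπu, hπval x hx] at hxy
            right; right
            exact ⟨Subtype.ext_iff.mp hxy, rfl⟩
          · rw [hπval x hx, hπval y hy] at hxy
            left; exact Subtype.ext_iff.mp hxy
        have hπne : ∀ x y, G.Adj x y → π x ≠ π y := by
          intro x y hadjxy heq
          rcases hπeq x y heq with h | ⟨hx, hy⟩ | ⟨hx, hy⟩
          · subst h; exact G.irrefl hadjxy
          · subst hx; subst hy; exact hnadj hadjxy
          · subst hx; subst hy; exact hnadj hadjxy.symm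
        set G' : SimpleGraph {x : V // x ≠ u} :=
          { Adj := fun a b => ∃ x y, G.Adj x y ∧ π x = a ∧ π y = b
            symm := by
              constructor
              rintro a b ⟨x, y, hxy, rfl, rfl⟩
              exact ⟨y, x, hxy.symm, rfl, rfl⟩
            loopless := by
              constructor
              rintro a ⟨x, y, hxy, rfl, h⟩
              exact hπne x y hxy h.symm } with hG'
        have hcard' : Fintype.card {x : V // x ≠ u} = N - 1 := by
          have h1 : Fintype.card {x : V // ¬ (x = u)} = Fintype.card V - 1 := by
            rw [Fintype.card_subtype_compl, Fintype.card_subtype_eq]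
          rw [← hcard]
          exact h1
        have hNpos : 0 < N := by
          rw [← hcard]
          exact Fintype.card_pos_iff.mpr ⟨u⟩
        -- complete n-colouring of G'
        have hf' : IsProperComplete G' (fun a => f a.1) := by
          refine ⟨?_, ?_, ?_⟩
          · rintro a b ⟨x, y, hxy, rfl, rfl⟩ heq
            have heq' : f (π x).1 = f (π y).1 := heq
            rw [hfπ, hfπ] at heq'
            exact hfp x y hxy heq'
          · intro c
            obtain ⟨x, hx⟩ := hfs c
            refine ⟨π x, ?_⟩
            show f (π x).1 = c
            rw [hfπ]; exact hx
          · intro c₁ c₂ hc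
            obtain ⟨x, y, hxy, hx, hy⟩ := hfc c₁ c₂ hc
            refine ⟨π x, π y, ⟨x, y, hxy, rfl, rfl⟩, ?_, ?_⟩
            · show f (π x).1 = c₁
              rw [hfπ]; exact hx
            · show f (π y).1 = c₂
              rw [hfπ]; exact hy
        -- (m+1)-colourability of G'
        obtain ⟨D⟩ := hB
        have hcol' : G'.Colorable (m + 1) := by
          refine ⟨SimpleGraph.Coloring.mk
            (fun a => if a.1 = v then Fin.last m else (D a.1).castSucc) ?_⟩
          rintro a b ⟨x, y, hxy, rfl, rfl⟩ heq
          by_cases ha : (π x).1 = v <;> by_cases hb : (π y).1 = v <;>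
            simp only [ha, hb, if_pos, if_neg, if_true, if_false] at heq
          · exact hπne x y hxy (Subtype.ext (ha.trans hb.symm))
          · exact (Fin.castSucc_lt_last _).ne' heq
          · exact (Fin.castSucc_lt_last _).ne heq
          · have hxu : x ≠ u := by
              intro h; apply ha; rw [h, hπu]
            have hyu : y ≠ u := by
              intro h; apply hb; rw [h, hπu]
            have hxv : (π x).1 = x := by rw [hπval x hxu]
            have hyv : (π y).1 = y := by rw [hπval y hyu]
            rw [hxv, hyv] at heq
            exact D.valid hxy (Fin.castSucc_injective m heq)
        obtain ⟨g', hg'⟩ := IH (N - 1) (by omega) G' hcard' n (m + 1)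
          (fun a => f a.1) hf' hcol' hkn
        refine ⟨fun x => g' (π x), ?_, ?_, ?_⟩
        · intro x y hxy heq
          exact hg'.1 (π x) (π y) ⟨x, y, hxy, rfl, rfl⟩ heq
        · intro c
          obtain ⟨a, ha⟩ := hg'.2.1 c
          refine ⟨a.1, ?_⟩
          show g' (π a.1) = c
          rw [hπval a.1 a.2]
          exact ha
        · intro c₁ c₂ hc
          obtain ⟨a, b, hab, ha, hb⟩ := hg'.2.2 c₁ c₂ hc
          obtain ⟨x, y, hxy, hx, hy⟩ := hab
          refine ⟨x, y, hxy, ?_, ?_⟩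
          · show g' (π x) = c₁
            rw [hx]; exact ha
          · show g' (π y) = c₂
            rw [hy]; exact hb

theorem interpolation {V : Type*} [Fintype V] (G : SimpleGraph V) (k : ℕ)
    (h₁ : G.chromaticNumber ≤ k) (h₂ : k ≤ achr G) :
    ∃ f : V → Fin k, IsProperComplete G f := by
  classical
  have hcolk : G.Colorable k := SimpleGraph.chromaticNumber_le_iff_colorable.mp h₁
  rcases Nat.eq_zero_or_pos k with hk0 | hkpos
  · subst hk0
    obtain ⟨C⟩ := hcolk
    exact ⟨C, fun v w h => C.valid h, fun b => b.elim0, fun c => c.elim0⟩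
  · have hachr : achr G = sSup {n : ℕ | ∃ f : V → Fin n, IsProperComplete G f} := rfl
    set S := {n : ℕ | ∃ f : V → Fin n, IsProperComplete G f} with hS
    have hbdd : BddAbove S := by
      refine ⟨Fintype.card V, ?_⟩
      rintro n ⟨f, hf⟩
      have := Fintype.card_le_of_surjective f hf.2.1
      simpa using this
    have hne : S.Nonempty := by
      by_contra h
      rw [Set.not_nonempty_iff_eq_empty] at h
      have h0 : achr G = 0 := by rw [hachr, h]; exact csSup_empty
      omega
    have hmem : sSup S ∈ S := Nat.sSup_mem hne hbdd
    obtain ⟨f, hf⟩ := hmem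
    exact interpolation_aux (Fintype.card V) G rfl (sSup S) k f hf hcolk h₂
end

section
/- If M ∈ 𝓜(6,7,C) with |C| = 19, then no colour of C has frequency 1. -/
/-- `M ∈ 𝓜(p,q,C)`: all lines of `M` have pairwise distinct entries and every
pair of distinct colours of `C` is row-based or column-based in `M`. -/
def MemM {p q : ℕ} {C : Type*} (M : Fin p → Fin q → C) : Prop :=
  (∀ i, Function.Injective (M i)) ∧
  (∀ j, Function.Injective fun i => M i j) ∧
  ∀ c₁ c₂ : C, c₁ ≠ c₂ →
    (∃ i j₁ j₂, M i j₁ = c₁ ∧ M i j₂ = c₂) ∨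
    (∃ i₁ i₂ j, M i₁ j = c₁ ∧ M i₂ j = c₂)

/-- The frequency of a colour: its number of occurrences as an entry of `M`. -/
noncomputable def freq {C : Type*} (M : Fin 6 → Fin 7 → C) (γ : C) : ℕ :=
  Nat.card {x : Fin 6 × Fin 7 // M x.1 x.2 = γ}

theorem no_freq_one {C : Type*} [Fintype C] (M : Fin 6 → Fin 7 → C)
    (hM : MemM M) (hC : Fintype.card C = 19) (γ : C) :
    freq M γ ≠ 1 := by
  classical
  intro h1
  rw [freq, Nat.card_eq_one_iff_unique] at h1
  obtain ⟨hsub, ⟨⟨x, hx⟩⟩⟩ := h1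
  have uniq : ∀ i j, M i j = γ → (i, j) = x := by
    intro i j h
    have := hsub.elim (⟨(i, j), h⟩ : {y : Fin 6 × Fin 7 // M y.1 y.2 = γ}) ⟨x, hx⟩
    exact congrArg Subtype.val this
  have key : ∀ c : C,
      c ∈ Finset.univ.image (M x.1) ∪ Finset.univ.image (fun i => M i x.2) := by
    intro c
    rw [Finset.mem_union, Finset.mem_image, Finset.mem_image]
    by_cases hc : c = γ
    · exact Or.inl ⟨x.2, Finset.mem_univ _, hx.trans hc.symm⟩
    · rcases hM.2.2 c γ hc with ⟨i, j₁, j₂, h₁, h₂⟩ | ⟨i₁, i₂, j, h₁, h₂⟩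
      · have hi : i = x.1 := congrArg Prod.fst (uniq i j₂ h₂)
        exact Or.inl ⟨j₁, Finset.mem_univ _, hi ▸ h₁⟩
      · have hj : j = x.2 := congrArg Prod.snd (uniq i₂ j h₂)
        exact Or.inr ⟨i₁, Finset.mem_univ _, hj ▸ h₁⟩
  have hle : (19 : ℕ) ≤ 13 := by
    calc (19 : ℕ) = Fintype.card C := hC.symm
      _ = Finset.univ.card := (Finset.card_univ).symm
      _ ≤ (Finset.univ.image (M x.1) ∪ Finset.univ.image (fun i => M i x.2)).card :=
          Finset.card_le_card (fun c _ => key c)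
      _ ≤ (Finset.univ.image (M x.1)).card +
          (Finset.univ.image (fun i => M i x.2)).card := Finset.card_union_le _ _
      _ ≤ 7 + 6 := by
          have h1 := Finset.card_image_le (s := (Finset.univ : Finset (Fin 7))) (f := M x.1)
          have h2 := Finset.card_image_le (s := (Finset.univ : Finset (Fin 6)))
            (f := fun i => M i x.2)
          simp only [Finset.card_univ, Fintype.card_fin] at h1 h2
          omega
  omega
end

section
/- If M ∈ 𝓜(6,7,C) with |C| = 19, then c₃₊ + c₄₊ ≤ 4, where c₃₊ (resp. c₄₊) is the number of colours of frequency at least 3 (resp. at least 4). -/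
open Finset in
lemma freq_eq_filter {C : Type*} [DecidableEq C] (M : Fin 6 → Fin 7 → C) (c : C) :
    freq M c = (Finset.univ.filter fun x : Fin 6 × Fin 7 => M x.1 x.2 = c).card := by
  rw [freq, Nat.card_eq_fintype_card, Fintype.card_subtype]

lemma two_le_freq {C : Type*} [Fintype C] (M : Fin 6 → Fin 7 → C)
    (hM : MemM M) (hC : Fintype.card C = 19) (c : C) : 2 ≤ freq M c := by
  classical
  by_contra h
  push_neg at h
  obtain ⟨c', hc'⟩ : ∃ c' : C, c' ≠ c := by
    have h1 : 1 < Fintype.card C := by omega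
    obtain ⟨a, b, hab⟩ := Fintype.exists_pair_of_one_lt_card h1
    rcases eq_or_ne a c with rfl | ha
    · exact ⟨b, fun hb => hab hb.symm⟩
    · exact ⟨a, ha⟩
  obtain ⟨i₀, j₀, hij⟩ : ∃ i j, M i j = c := by
    rcases hM.2.2 c c' (Ne.symm hc') with ⟨i, j₁, j₂, h1, _⟩ | ⟨i₁, i₂, j, h1, _⟩
    · exact ⟨i, j₁, h1⟩
    · exact ⟨i₁, j, h1⟩
  have hle1 : Fintype.card {x : Fin 6 × Fin 7 // M x.1 x.2 = c} ≤ 1 := by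
    have := h
    rw [freq, Nat.card_eq_fintype_card] at this
    omega
  have huniq : ∀ i j, M i j = c → i = i₀ ∧ j = j₀ := by
    intro i j hij'
    have := Fintype.card_le_one_iff.mp hle1 ⟨(i, j), hij'⟩ ⟨(i₀, j₀), hij⟩
    have := congrArg Subtype.val this
    exact ⟨congrArg Prod.fst this, congrArg Prod.snd this⟩
  have hsurj : Function.Surjective
      (Sum.elim (fun j => M i₀ j) (fun i => M i j₀) : Fin 7 ⊕ Fin 6 → C) := by
    intro d
    rcases eq_or_ne d c with rfl | hd
    · exact ⟨Sum.inl j₀, hij⟩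
    · rcases hM.2.2 d c hd with ⟨i, j₁, j₂, h1, h2⟩ | ⟨i₁, i₂, j, h1, h2⟩
      · obtain ⟨hi, -⟩ := huniq i j₂ h2
        exact ⟨Sum.inl j₁, by simp [← hi, h1]⟩
      · obtain ⟨-, hj⟩ := huniq i₂ j h2
        exact ⟨Sum.inr i₁, by simp [← hj, h1]⟩
  have := Fintype.card_le_of_surjective _ hsurj
  simp [hC] at this

theorem c3plus_add_c4plus_le {C : Type*} [Fintype C] (M : Fin 6 → Fin 7 → C)
    (hM : MemM M) (hC : Fintype.card C = 19) :
    Nat.card {c : C // 3 ≤ freq M c} + Nat.card {c : C // 4 ≤ freq M c} ≤ 4 := by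
  classical
  have h2 : ∀ c, 2 ≤ freq M c := two_le_freq M hM hC
  have hsum : ∑ c, freq M c = 42 := by
    have hfib := Finset.card_eq_sum_card_fiberwise
      (f := fun x : Fin 6 × Fin 7 => M x.1 x.2) (s := Finset.univ) (t := Finset.univ)
      (fun x _ => Finset.mem_univ _)
    have : ∑ c, freq M c = (Finset.univ : Finset (Fin 6 × Fin 7)).card := by
      rw [hfib]
      exact Finset.sum_congr rfl fun c _ => freq_eq_filter M c
    simpa using this
  have key : ∑ c, (2 + (if 3 ≤ freq M c then 1 else 0)
      + (if 4 ≤ freq M c then 1 else 0)) ≤ 42 := by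
    rw [← hsum]
    refine Finset.sum_le_sum fun c _ => ?_
    have := h2 c
    split_ifs <;> omega
  rw [Finset.sum_add_distrib, Finset.sum_add_distrib, Finset.sum_const,
    ← Finset.card_filter, ← Finset.card_filter, Finset.card_univ, hC, smul_eq_mul] at key
  have h3 : Nat.card {c : C // 3 ≤ freq M c}
      = (Finset.univ.filter fun c : C => 3 ≤ freq M c).card := by
    rw [Nat.card_eq_fintype_card, Fintype.card_subtype]
  have h4 : Nat.card {c : C // 4 ≤ freq M c}
      = (Finset.univ.filter fun c : C => 4 ≤ freq M c).card := by
    rw [Nat.card_eq_fintype_card, Fintype.card_subtype]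
  omega
end

section
/- If M ∈ 𝓜(6,7,C) with |C| = 19, then for any two distinct rows i₁, i₂ ∈ [1,6], the number of colours of frequency 2 that appear in both row i₁ and row i₂ is at most 3. -/
open Finset in
theorem shared_rows_le_three {C : Type*} [Fintype C] (M : Fin 6 → Fin 7 → C)
    (hM : MemM M) (hC : Fintype.card C = 19) (i₁ i₂ : Fin 6) (h : i₁ ≠ i₂) :
    Nat.card {c : C // freq M c = 2 ∧ (∃ j, M i₁ j = c) ∧ (∃ j, M i₂ j = c)} ≤ 3 := by
  classical
  by_contra hcon
  push_neg at hcon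
  obtain ⟨hrow, hcol, hpair⟩ := hM
  -- S : the set of shared frequency-2 colours
  set S : Finset C :=
    univ.filter (fun c => freq M c = 2 ∧ (∃ j, M i₁ j = c) ∧ (∃ j, M i₂ j = c)) with hSdef
  have hNat : Nat.card {c : C // freq M c = 2 ∧ (∃ j, M i₁ j = c) ∧ (∃ j, M i₂ j = c)}
      = S.card := by
    rw [Nat.card_eq_fintype_card, Fintype.card_subtype]
  rw [hNat] at hcon
  have hk : 4 ≤ S.card := hcon
  -- occurrence characterization for frequency-2 colours present in both rows
  have hocc : ∀ c : C, freq M c = 2 → ∀ a b : Fin 7, M i₁ a = c → M i₂ b = c →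
      ∀ r : Fin 6, ∀ j : Fin 7, M r j = c → (r = i₁ ∧ j = a) ∨ (r = i₂ ∧ j = b) := by
    intro c hc2 a b ha hb r j hrj
    by_contra hne
    push_neg at hne
    have hT : (univ.filter (fun x : Fin 6 × Fin 7 => M x.1 x.2 = c)).card = 2 := by
      have := hc2
      unfold freq at this
      rw [Nat.card_eq_fintype_card, Fintype.card_subtype] at this
      exact this
    have hne1 : (r, j) ≠ ((i₁, a) : Fin 6 × Fin 7) := by
      intro he
      have hr : r = i₁ := congrArg Prod.fst he
      have hj : j = a := congrArg Prod.snd he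
      rcases hne with ⟨h1, _⟩
      exact absurd hj (h1 hr)
    have hne2 : (r, j) ≠ ((i₂, b) : Fin 6 × Fin 7) := by
      intro he
      have hr : r = i₂ := congrArg Prod.fst he
      have hj : j = b := congrArg Prod.snd he
      rcases hne with ⟨_, h2⟩
      exact absurd hj (h2 hr)
    have hne3 : ((i₁, a) : Fin 6 × Fin 7) ≠ (i₂, b) := by
      intro he
      exact h (congrArg Prod.fst he)
    have hsub : ({(r, j), (i₁, a), (i₂, b)} : Finset (Fin 6 × Fin 7)) ⊆
        univ.filter (fun x : Fin 6 × Fin 7 => M x.1 x.2 = c) := by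
      intro x hx
      simp only [mem_insert, mem_singleton] at hx
      simp only [mem_filter, mem_univ, true_and]
      rcases hx with rfl | rfl | rfl
      · exact hrj
      · exact ha
      · exact hb
    have hcard3 : ({(r, j), (i₁, a), (i₂, b)} : Finset (Fin 6 × Fin 7)).card = 3 := by
      rw [card_insert_of_notMem (by simp [hne1, hne2]),
        card_insert_of_notMem (by simp [hne3]), card_singleton]
    have := Finset.card_le_card hsub
    omega
  -- pick a colour c₀ from S with its two occurrence columns a, b
  have hSne : S.Nonempty := Finset.card_pos.mp (by omega)
  obtain ⟨c₀, hc₀⟩ := hSne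
  rw [hSdef, mem_filter] at hc₀
  obtain ⟨-, hf₀, ⟨a, ha⟩, ⟨b, hb⟩⟩ := hc₀
  -- InRow : colours appearing in row i₁ or row i₂
  set InRow : Finset C :=
    univ.filter (fun d => (∃ j, M i₁ j = d) ∨ (∃ j, M i₂ j = d)) with hIRdef
  set Outside : Finset C :=
    univ.filter (fun d => ¬((∃ j, M i₁ j = d) ∨ (∃ j, M i₂ j = d))) with hOdef
  have hsplit : InRow.card + Outside.card = 19 := by
    rw [hIRdef, hOdef, Finset.card_filter_add_card_filter_not,
      Finset.card_univ, hC]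
  -- Step A : InRow.card + S.card ≤ 14
  have hA : InRow.card + S.card ≤ 14 := by
    set f : C → Fin 6 × Fin 7 := fun d =>
      if h1 : ∃ j, M i₁ j = d then (i₁, h1.choose)
      else if h2 : ∃ j, M i₂ j = d then (i₂, h2.choose) else (i₁, a) with hfdef
    set g : C → Fin 6 × Fin 7 := fun d =>
      if h2 : ∃ j, M i₂ j = d then (i₂, h2.choose) else (i₁, a) with hgdef
    have hfval : ∀ d ∈ InRow, M (f d).1 (f d).2 = d := by
      intro d hd
      rw [hIRdef, mem_filter] at hd
      rw [hfdef]
      by_cases h1 : ∃ j, M i₁ j = d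
      · simp only [h1, dif_pos]
        exact h1.choose_spec
      · have h2 : ∃ j, M i₂ j = d := by tauto
        simp only [h1, h2, dif_neg, dif_pos, not_false_iff]
        exact h2.choose_spec
    have hffst : ∀ d : C, (f d).1 = i₁ ∨ (f d).1 = i₂ := by
      intro d
      rw [hfdef]
      by_cases h1 : ∃ j, M i₁ j = d
      · simp [h1]
      · by_cases h2 : ∃ j, M i₂ j = d <;> simp [h1, h2]
    have hgval : ∀ d ∈ S, M (g d).1 (g d).2 = d ∧ (g d).1 = i₂ := by
      intro d hd
      rw [hSdef, mem_filter] at hd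
      obtain ⟨-, -, -, h2⟩ := hd
      rw [hgdef]
      beta_reduce
      rw [dif_pos h2]
      exact ⟨h2.choose_spec, rfl⟩
    have hfS : ∀ d ∈ S, (f d).1 = i₁ := by
      intro d hd
      rw [hSdef, mem_filter] at hd
      obtain ⟨-, -, h1, -⟩ := hd
      rw [hfdef]
      simp [h1]
    have hSsubIR : S ⊆ InRow := by
      intro d hd
      rw [hSdef, mem_filter] at hd
      rw [hIRdef, mem_filter]
      exact ⟨mem_univ d, Or.inl hd.2.2.1⟩
    have hinjf : Set.InjOn f InRow := by
      intro d hd d' hd' he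
      have := hfval d hd
      rw [he, hfval d' hd'] at this
      exact this.symm
    have hinjg : Set.InjOn g S := by
      intro d hd d' hd' he
      have := (hgval d hd).1
      rw [he, (hgval d' hd').1] at this
      exact this.symm
    have hdisj : Disjoint (InRow.image f) (S.image g) := by
      rw [Finset.disjoint_left]
      intro x hx hx'
      obtain ⟨d, hd, hfd⟩ := Finset.mem_image.mp hx
      obtain ⟨d', hd', hgd⟩ := Finset.mem_image.mp hx'
      have hdd : d = d' := by
        have h1 := hfval d hd
        have h2 := (hgval d' hd').1
        rw [hfd] at h1
        rw [hgd] at h2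
        rw [← h1, ← h2]
      subst hdd
      have h1 : (f d).1 = i₁ := hfS d hd'
      have h2 : (g d).1 = i₂ := (hgval d hd').2
      rw [hfd] at h1
      rw [hgd] at h2
      exact h (h1 ▸ h2 ▸ rfl)
    have hsubL : InRow.image f ∪ S.image g ⊆
        ({i₁, i₂} : Finset (Fin 6)) ×ˢ (univ : Finset (Fin 7)) := by
      intro x hx
      rw [Finset.mem_union] at hx
      rw [Finset.mem_product]
      refine ⟨?_, mem_univ _⟩
      rcases hx with hx | hx
      · obtain ⟨d, hd, hfd⟩ := Finset.mem_image.mp hx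
        rcases hffst d with h1 | h1 <;> rw [← hfd] <;> simp [h1]
      · obtain ⟨d, hd, hgd⟩ := Finset.mem_image.mp hx
        have := (hgval d hd).2
        rw [hgd] at this
        simp [this]
    have hLcard : (({i₁, i₂} : Finset (Fin 6)) ×ˢ (univ : Finset (Fin 7))).card = 14 := by
      rw [Finset.card_product, Finset.card_insert_of_notMem (by simp [h]),
        Finset.card_singleton, Finset.card_univ]
      simp
    have h1 : (InRow.image f ∪ S.image g).card ≤ 14 := by
      rw [← hLcard]
      exact Finset.card_le_card hsubL
    rw [Finset.card_union_of_disjoint hdisj,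
      Finset.card_image_of_injOn hinjf, Finset.card_image_of_injOn hinjg] at h1
    exact h1
  -- Step B : Outside.card ≤ 8
  have hB : Outside.card ≤ 8 := by
    have hwit : ∀ d ∈ Outside, ∃ x : Fin 6 × Fin 7,
        M x.1 x.2 = d ∧ x.1 ≠ i₁ ∧ x.1 ≠ i₂ ∧ (x.2 = a ∨ x.2 = b) := by
      intro d hd
      rw [hOdef, mem_filter] at hd
      obtain ⟨-, hd⟩ := hd
      push_neg at hd
      obtain ⟨hd1, hd2⟩ := hd
      have hdc : c₀ ≠ d := by
        intro he
        exact hd1 a (he ▸ ha)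
      rcases hpair c₀ d hdc with ⟨i, j₁, j₂, h1, h2⟩ | ⟨r₁, r₂, j, h1, h2⟩
      · rcases hocc c₀ hf₀ a b ha hb i j₁ h1 with ⟨hi, -⟩ | ⟨hi, -⟩
        · exact absurd h2 (hi ▸ hd1 j₂)
        · exact absurd h2 (hi ▸ hd2 j₂)
      · have hj : j = a ∨ j = b := by
          rcases hocc c₀ hf₀ a b ha hb r₁ j h1 with ⟨-, hj⟩ | ⟨-, hj⟩
          · exact Or.inl hj
          · exact Or.inr hj
        refine ⟨(r₂, j), h2, ?_, ?_, hj⟩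
        · intro he
          exact hd1 j (he ▸ h2)
        · intro he
          exact hd2 j (he ▸ h2)
    set w : C → Fin 6 × Fin 7 := fun d =>
      if hw : ∃ x : Fin 6 × Fin 7,
          M x.1 x.2 = d ∧ x.1 ≠ i₁ ∧ x.1 ≠ i₂ ∧ (x.2 = a ∨ x.2 = b) then hw.choose
      else (i₁, a) with hwdef
    have hwprop : ∀ d ∈ Outside, M (w d).1 (w d).2 = d ∧ (w d).1 ≠ i₁ ∧ (w d).1 ≠ i₂ ∧
        ((w d).2 = a ∨ (w d).2 = b) := by
      intro d hd
      have hw := hwit d hd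
      rw [hwdef]
      simp only [hw, dif_pos]
      exact hw.choose_spec
    set W : Finset (Fin 6 × Fin 7) :=
      (({i₁, i₂} : Finset (Fin 6))ᶜ) ×ˢ ({a, b} : Finset (Fin 7)) with hWdef
    have hWcard : W.card ≤ 8 := by
      have h4 : (({i₁, i₂} : Finset (Fin 6))ᶜ).card = 4 := by
        rw [Finset.card_compl, Finset.card_insert_of_notMem (by simp [h]),
          Finset.card_singleton, Fintype.card_fin]
      have h2 : ({a, b} : Finset (Fin 7)).card ≤ 2 :=
        le_trans (Finset.card_insert_le _ _) (by simp)
      rw [hWdef, Finset.card_product, h4]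
      omega
    have hmaps : ∀ d ∈ Outside, w d ∈ W := by
      intro d hd
      obtain ⟨-, h1, h2, h3⟩ := hwprop d hd
      rw [hWdef, Finset.mem_product, Finset.mem_compl]
      constructor
      · simp [h1, h2]
      · rcases h3 with h3 | h3 <;> simp [h3]
    have hinjw : Set.InjOn w Outside := by
      intro d hd d' hd' he
      have h1 := (hwprop d hd).1
      rw [he, (hwprop d' hd').1] at h1
      exact h1.symm
    calc Outside.card ≤ W.card := Finset.card_le_card_of_injOn w hmaps hinjw
      _ ≤ 8 := hWcard
  omega
end

section
/- If M ∈ 𝓜(6,7,C) with |C| = 19, then for any two distinct columns j, l ∈ [1,7], the number of colours of frequency 2 appearing in both column j and column l is at most 2. -/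
open Finset

open scoped Classical in
noncomputable def cellsOf {C : Type*} (M : Fin 6 → Fin 7 → C) (c : C) :
    Finset (Fin 6 × Fin 7) := Finset.univ.filter fun x => M x.1 x.2 = c

lemma mem_cellsOf {C : Type*} {M : Fin 6 → Fin 7 → C} {c : C} {x : Fin 6 × Fin 7} :
    x ∈ cellsOf M c ↔ M x.1 x.2 = c := by
  classical
  simp [cellsOf]

lemma freq_eq_card {C : Type*} (M : Fin 6 → Fin 7 → C) (c : C) :
    freq M c = (cellsOf M c).card := by
  classical
  rw [freq, Nat.card_eq_fintype_card, Fintype.card_subtype, cellsOf]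

lemma sum_cells {C : Type*} [Fintype C] (M : Fin 6 → Fin 7 → C) :
    ∑ c : C, (cellsOf M c).card = 42 := by
  classical
  have h := Finset.card_eq_sum_card_fiberwise
    (s := (univ : Finset (Fin 6 × Fin 7))) (t := (univ : Finset C))
    (f := fun x => M x.1 x.2) (fun x _ => mem_univ _)
  have h42 : (univ : Finset (Fin 6 × Fin 7)).card = 42 := by simp
  rw [h42] at h
  rw [h]
  refine Finset.sum_congr rfl fun c _ => ?_
  congr 1

lemma appears {C : Type*} [Fintype C] (M : Fin 6 → Fin 7 → C) (hM : MemM M)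
    (hC : Fintype.card C = 19) (c : C) : ∃ x : Fin 6 × Fin 7, M x.1 x.2 = c := by
  have h1 : 1 < Fintype.card C := by omega
  obtain ⟨c', hc'⟩ := Fintype.exists_ne_of_one_lt_card h1 c
  rcases hM.2.2 c' c hc' with ⟨i, j₁, j₂, _, h₂⟩ | ⟨i₁, i₂, jj, _, h₂⟩
  · exact ⟨(i, j₂), h₂⟩
  · exact ⟨(i₂, jj), h₂⟩

lemma two_le_card {C : Type*} [Fintype C] (M : Fin 6 → Fin 7 → C) (hM : MemM M)
    (hC : Fintype.card C = 19) (c : C) : 2 ≤ (cellsOf M c).card := by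
  classical
  by_contra hlt
  push_neg at hlt
  obtain ⟨x₀, hx₀⟩ := appears M hM hC c
  have hx₀m : x₀ ∈ cellsOf M c := mem_cellsOf.mpr hx₀
  have hone : cellsOf M c = {x₀} := by
    refine (Finset.eq_of_subset_of_card_le (Finset.singleton_subset_iff.mpr hx₀m) ?_).symm
    simpa using Nat.lt_succ_iff.mp hlt
  have hcover : ∀ c' : C, (∃ y, M x₀.1 y = c') ∨ (∃ x, M x x₀.2 = c') := by
    intro c'
    by_cases hcc : c' = c
    · exact Or.inl ⟨x₀.2, by rw [hx₀, hcc]⟩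
    · rcases hM.2.2 c c' (fun h => hcc h.symm) with ⟨i, j₁, j₂, h₁, h₂⟩ | ⟨i₁, i₂, jj, h₁, h₂⟩
      · have hm : (i, j₁) ∈ cellsOf M c := mem_cellsOf.mpr h₁
        rw [hone, Finset.mem_singleton] at hm
        exact Or.inl ⟨j₂, by rw [← h₂]; congr 1; exact (congrArg Prod.fst hm).symm⟩
      · have hm : (i₁, jj) ∈ cellsOf M c := mem_cellsOf.mpr h₁
        rw [hone, Finset.mem_singleton] at hm
        exact Or.inr ⟨i₂, by rw [← h₂]; congr 1; exact (congrArg Prod.snd hm).symm⟩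
  let f : C → Fin 7 ⊕ Fin 6 := fun c' =>
    if h : ∃ y, M x₀.1 y = c' then Sum.inl h.choose
    else Sum.inr ((hcover c').resolve_left h).choose
  have hinj : Function.Injective f := by
    intro a b hab
    simp only [f] at hab
    split_ifs at hab with ha hb hb
    · have := Sum.inl.inj hab
      rw [← ha.choose_spec, ← hb.choose_spec, this]
    · have := Sum.inr.inj hab
      rw [← ((hcover a).resolve_left ha).choose_spec,
          ← ((hcover b).resolve_left hb).choose_spec, this]
  have hle := Fintype.card_le_of_injective f hinj
  rw [hC] at hle
  simp at hle

lemma sum_T_le {C : Type*} [Fintype C] (M : Fin 6 → Fin 7 → C) (hM : MemM M)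
    (hC : Fintype.card C = 19) (T : Finset C) :
    ∑ c ∈ T, (cellsOf M c).card ≤ 4 + 2 * T.card := by
  classical
  have hsplit : ∑ c ∈ univ \ T, (cellsOf M c).card + ∑ c ∈ T, (cellsOf M c).card = 42 := by
    rw [Finset.sum_sdiff (Finset.subset_univ T)]
    exact sum_cells M
  have hge : (univ \ T).card • 2 ≤ ∑ c ∈ univ \ T, (cellsOf M c).card :=
    Finset.card_nsmul_le_sum _ _ _ (fun c _ => two_le_card M hM hC c)
  have hcard : (univ \ T).card = 19 - T.card := by
    rw [Finset.card_sdiff_of_subset (Finset.subset_univ T), Finset.card_univ, hC]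
  have hTle : T.card ≤ 19 := by
    have := Finset.card_le_univ T
    omega
  rw [hcard] at hge
  simp only [smul_eq_mul] at hge
  omega

lemma cells_pair {C : Type*} (M : Fin 6 → Fin 7 → C) {c : C} {a b : Fin 6} {j l : Fin 7}
    (hjl : j ≠ l) (hc : (cellsOf M c).card = 2) (h1 : M a j = c) (h2 : M b l = c) :
    cellsOf M c = {(a, j), (b, l)} := by
  classical
  have m1 : (a, j) ∈ cellsOf M c := mem_cellsOf.mpr h1
  have m2 : (b, l) ∈ cellsOf M c := mem_cellsOf.mpr h2
  have hsub : ({(a, j), (b, l)} : Finset (Fin 6 × Fin 7)) ⊆ cellsOf M c :=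
    Finset.insert_subset m1 (Finset.singleton_subset_iff.mpr m2)
  have hne : ((a, j) : Fin 6 × Fin 7) ≠ (b, l) := fun e => hjl (congrArg Prod.snd e)
  have hcard2 : ({(a, j), (b, l)} : Finset (Fin 6 × Fin 7)).card = 2 := by
    rw [Finset.card_insert_of_notMem (by simp [hne]), Finset.card_singleton]
  exact (Finset.eq_of_subset_of_card_le hsub (by omega)).symm

set_option maxHeartbeats 1000000 in
theorem shared_cols_le_two {C : Type*} [Fintype C] (M : Fin 6 → Fin 7 → C)
    (hM : MemM M) (hC : Fintype.card C = 19) (j l : Fin 7) (h : j ≠ l) :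
    Nat.card {c : C // freq M c = 2 ∧ (∃ i, M i j = c) ∧ (∃ i, M i l = c)} ≤ 2 := by
  classical
  by_contra hcon
  push_neg at hcon
  have hcard : Nat.card {c : C // freq M c = 2 ∧ (∃ i, M i j = c) ∧ (∃ i, M i l = c)}
      = (univ.filter fun c => freq M c = 2 ∧ (∃ i, M i j = c) ∧ (∃ i, M i l = c)).card := by
    rw [Nat.card_eq_fintype_card, Fintype.card_subtype]
  rw [hcard] at hcon
  obtain ⟨c1, c2, c3, hc1, hc2, hc3, h12, h13, h23⟩ := Finset.two_lt_card_iff.mp hcon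
  simp only [Finset.mem_filter, Finset.mem_univ, true_and] at hc1 hc2 hc3
  obtain ⟨I1, hI1⟩ := hc1.2.1
  obtain ⟨I2, hI2⟩ := hc2.2.1
  obtain ⟨I3, hI3⟩ := hc3.2.1
  obtain ⟨I1', hI1'⟩ := hc1.2.2
  obtain ⟨I2', hI2'⟩ := hc2.2.2
  obtain ⟨I3', hI3'⟩ := hc3.2.2
  set cs : Fin 3 → C := ![c1, c2, c3] with hcsdef
  set I : Fin 3 → Fin 6 := ![I1, I2, I3] with hIdef
  set I' : Fin 3 → Fin 6 := ![I1', I2', I3'] with hI'def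
  have hcsj : ∀ k, M (I k) j = cs k := by
    intro k; fin_cases k <;> simp [cs, I] <;> assumption
  have hcsl : ∀ k, M (I' k) l = cs k := by
    intro k; fin_cases k <;> simp [cs, I'] <;> assumption
  have hfreq : ∀ k, (cellsOf M (cs k)).card = 2 := by
    intro k; rw [← freq_eq_card]; fin_cases k <;> simp [cs] <;>
      first | exact hc1.1 | exact hc2.1 | exact hc3.1
  have hcells : ∀ k, cellsOf M (cs k) = {(I k, j), (I' k, l)} := fun k =>
    cells_pair M h (hfreq k) (hcsj k) (hcsl k)
  have hcsInj : ∀ a b, cs a = cs b → a = b := by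
    intro a b hab
    fin_cases a <;> fin_cases b <;> simp_all [cs]
  have hIinj : ∀ a b, I a = I b → a = b := by
    intro a b e
    exact hcsInj a b (by rw [← hcsj a, ← hcsj b, e])
  have hI'inj : ∀ a b, I' a = I' b → a = b := by
    intro a b e
    exact hcsInj a b (by rw [← hcsl a, ← hcsl b, e])
  have hII' : ∀ k, I k ≠ I' k := by
    intro k e
    exact h (hM.1 (I k) (show M (I k) j = M (I k) l by
      rw [hcsj k, e, hcsl k]))
  set O : Finset C := univ.filter (fun o => (∀ i, M i j ≠ o) ∧ (∀ i, M i l ≠ o)) with hOdef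
  set X : Finset C := univ.image (fun i => M i j) with hXdef
  set Y : Finset C := univ.image (fun i => M i l) with hYdef
  have hmemO : ∀ o, o ∈ O ↔ (∀ i, M i j ≠ o) ∧ (∀ i, M i l ≠ o) := by
    intro o; simp [hOdef]
  have hmemX : ∀ o, o ∈ X ↔ ∃ i, M i j = o := by intro o; simp [hXdef]
  have hmemY : ∀ o, o ∈ Y ↔ ∃ i, M i l = o := by intro o; simp [hYdef]
  have hXcard : X.card = 6 := by
    rw [hXdef, Finset.card_image_of_injective _ (hM.2.1 j), Finset.card_univ]
    simp
  have hYcard : Y.card = 6 := by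
    rw [hYdef, Finset.card_image_of_injective _ (hM.2.1 l), Finset.card_univ]
    simp
  have hcsXY : ({c1, c2, c3} : Finset C) ⊆ X ∩ Y := by
    intro x hx
    simp only [Finset.mem_insert, Finset.mem_singleton] at hx
    rw [Finset.mem_inter, hmemX, hmemY]
    rcases hx with rfl | rfl | rfl
    exacts [⟨⟨I1, hI1⟩, ⟨I1', hI1'⟩⟩, ⟨⟨I2, hI2⟩, ⟨I2', hI2'⟩⟩, ⟨⟨I3, hI3⟩, ⟨I3', hI3'⟩⟩]
  have hcs3 : ({c1, c2, c3} : Finset C).card = 3 := by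
    rw [Finset.card_insert_of_notMem (by simp [h12, h13]),
      Finset.card_insert_of_notMem (by simp [h23]), Finset.card_singleton]
  have hinter3 : 3 ≤ (X ∩ Y).card := hcs3 ▸ Finset.card_le_card hcsXY
  have hXYle : (X ∪ Y).card ≤ 9 := by
    have := Finset.card_union_add_card_inter X Y
    omega
  have hOcomp : O = (X ∪ Y)ᶜ := by
    ext o
    simp only [Finset.mem_compl, Finset.mem_union, hmemO o, hmemX o, hmemY o]
    push_neg
    exact Iff.rfl
  have hOcard_eq : O.card = 19 - (X ∪ Y).card := by
    rw [hOcomp, Finset.card_compl, hC]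
  have hO10 : 10 ≤ O.card := by omega
  have hcsO : ∀ k, cs k ∉ O := by
    intro k hk
    exact ((hmemO _).mp hk).1 (I k) (hcsj k)
  have hOut : ∀ o ∈ O, ∀ k, ∃ x : Fin 6 × Fin 7,
      M x.1 x.2 = o ∧ (x.1 = I k ∨ x.1 = I' k) ∧ x.2 ≠ j ∧ x.2 ≠ l := by
    intro o ho k
    have hone : o ≠ cs k := fun e => (e ▸ hcsO k) ho
    rcases hM.2.2 o (cs k) hone with ⟨r, x, y, hx, hy⟩ | ⟨r1, r2, y, h1, h2⟩
    · have hym : (r, y) ∈ cellsOf M (cs k) := mem_cellsOf.mpr hy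
      rw [hcells k] at hym
      simp only [Finset.mem_insert, Finset.mem_singleton, Prod.mk.injEq] at hym
      have hrow : r = I k ∨ r = I' k := by rcases hym with ⟨h1, _⟩ | ⟨h1, _⟩ <;> tauto
      have hxj : x ≠ j := by
        intro e; exact ((hmemO o).mp ho).1 r (by rw [← e]; exact hx)
      have hxl : x ≠ l := by
        intro e; exact ((hmemO o).mp ho).2 r (by rw [← e]; exact hx)
      exact ⟨(r, x), hx, hrow, hxj, hxl⟩
    · exfalso
      have hym : (r2, y) ∈ cellsOf M (cs k) := mem_cellsOf.mpr h2
      rw [hcells k] at hym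
      simp only [Finset.mem_insert, Finset.mem_singleton, Prod.mk.injEq] at hym
      rcases hym with ⟨_, rfl⟩ | ⟨_, rfl⟩
      · exact ((hmemO o).mp ho).1 r1 h1
      · exact ((hmemO o).mp ho).2 r1 h1
  set Kc : Finset (Fin 7) := univ \ {j, l} with hKcdef
  have hKccard : Kc.card = 5 := by
    rw [hKcdef, Finset.card_sdiff_of_subset (Finset.subset_univ _), Finset.card_univ]
    rw [Finset.card_insert_of_notMem (by simp [h]), Finset.card_singleton]
    simp
  have hGsat : ∀ k, ((({I k, I' k} : Finset (Fin 6)) ×ˢ Kc).image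
      (fun x : Fin 6 × Fin 7 => M x.1 x.2)) = O := by
    intro k
    have hGcard : (({I k, I' k} : Finset (Fin 6)) ×ˢ Kc).card = 10 := by
      rw [Finset.card_product, hKccard,
        Finset.card_insert_of_notMem (by simp [hII' k]), Finset.card_singleton]
    have hOsub : O ⊆ (({I k, I' k} : Finset (Fin 6)) ×ˢ Kc).image
        (fun x : Fin 6 × Fin 7 => M x.1 x.2) := by
      intro o ho
      obtain ⟨x, hxo, hrow, hxj, hxl⟩ := hOut o ho k
      rw [Finset.mem_image]
      refine ⟨x, ?_, hxo⟩
      rw [Finset.mem_product]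
      constructor
      · simp only [Finset.mem_insert, Finset.mem_singleton]; exact hrow
      · rw [hKcdef]; simp [hxj, hxl]
    have hle : ((({I k, I' k} : Finset (Fin 6)) ×ˢ Kc).image
        (fun x : Fin 6 × Fin 7 => M x.1 x.2)).card ≤ O.card := by
      calc _ ≤ (({I k, I' k} : Finset (Fin 6)) ×ˢ Kc).card := Finset.card_image_le
        _ = 10 := hGcard
        _ ≤ O.card := hO10
    exact (Finset.eq_of_subset_of_card_le hOsub hle).symm
  have hOcard : O.card = 10 := by
    have h1 : O.card ≤ 10 := by
      rw [← hGsat 0]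
      calc _ ≤ (({I 0, I' 0} : Finset (Fin 6)) ×ˢ Kc).card := Finset.card_image_le
        _ = 10 := by
          rw [Finset.card_product, hKccard,
            Finset.card_insert_of_notMem (by simp [hII' 0]), Finset.card_singleton]
    omega
  have hXYeq : X ∩ Y = {c1, c2, c3} := by
    have hXY9 : (X ∪ Y).card = 9 := by omega
    have hinterle : (X ∩ Y).card ≤ 3 := by
      have := Finset.card_union_add_card_inter X Y
      omega
    exact (Finset.eq_of_subset_of_card_le hcsXY (hcs3 ▸ hinterle)).symm
  have hsharedcs : ∀ c, c ∈ X → c ∈ Y → ∃ k, c = cs k := by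
    intro c hx hy
    have : c ∈ X ∩ Y := Finset.mem_inter.mpr ⟨hx, hy⟩
    rw [hXYeq] at this
    simp only [Finset.mem_insert, Finset.mem_singleton] at this
    rcases this with rfl | rfl | rfl
    exacts [⟨0, rfl⟩, ⟨1, rfl⟩, ⟨2, rfl⟩]
  set R : Finset (Fin 6) := (univ : Finset (Fin 3)).biUnion (fun k => {I k, I' k}) with hRdef
  have hmemR : ∀ ρ, ρ ∈ R ↔ ∃ k, ρ = I k ∨ ρ = I' k := by
    intro ρ
    simp only [hRdef, Finset.mem_biUnion, Finset.mem_univ, true_and, Finset.mem_insert,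
      Finset.mem_singleton]
  have hIR : ∀ k, I k ∈ R := fun k => (hmemR _).mpr ⟨k, Or.inl rfl⟩
  have hI'R : ∀ k, I' k ∈ R := fun k => (hmemR _).mpr ⟨k, Or.inr rfl⟩
  have hr3 : 3 ≤ R.card := by
    have hsub : ({I 0, I 1, I 2} : Finset (Fin 6)) ⊆ R := by
      intro x hx
      simp only [Finset.mem_insert, Finset.mem_singleton] at hx
      rcases hx with e | e | e <;> rw [e] <;> exact hIR _
    have : ({I 0, I 1, I 2} : Finset (Fin 6)).card = 3 := by
      rw [Finset.card_insert_of_notMem, Finset.card_insert_of_notMem, Finset.card_singleton]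
      · simp only [Finset.mem_singleton]
        intro e; exact absurd (hIinj _ _ e) (by decide)
      · simp only [Finset.mem_insert, Finset.mem_singleton]
        rintro (e | e) <;> exact absurd (hIinj _ _ e) (by decide)
    calc 3 = _ := this.symm
      _ ≤ R.card := Finset.card_le_card hsub
  have hr6 : R.card ≤ 6 := by
    have := Finset.card_le_univ R
    simpa using this
  have hRsat : ∀ ρ y, ρ ∈ R → y ≠ j → y ≠ l → M ρ y ∈ O := by
    intro ρ y hρ hyj hyl
    obtain ⟨k, hk⟩ := (hmemR ρ).mp hρ
    rw [← hGsat k, Finset.mem_image]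
    refine ⟨(ρ, y), ?_, rfl⟩
    rw [Finset.mem_product]
    constructor
    · simp only [Finset.mem_insert, Finset.mem_singleton]; exact hk
    · rw [hKcdef]; simp [hyj, hyl]
  set O2 : Finset C := O.filter (fun o => (cellsOf M o).card = 2) with hO2def
  set O3 : Finset C := O.filter (fun o => ¬((cellsOf M o).card = 2)) with hO3def
  have hO23 : O2.card + O3.card = 10 := by
    rw [hO2def, hO3def, Finset.card_filter_add_card_filter_not, hOcard]
  have hO3le : O3.card ≤ 4 := by
    have hT := sum_T_le M hM hC O3
    have h3 : ∀ o ∈ O3, 3 ≤ (cellsOf M o).card := by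
      intro o ho
      rw [hO3def, Finset.mem_filter] at ho
      have := two_le_card M hM hC o
      omega
    have := Finset.card_nsmul_le_sum O3 _ 3 h3
    simp only [smul_eq_mul] at this
    omega
  set D : Finset (Fin 6) := univ.filter
    (fun ρ => ∃ a b : Fin 3, a ≠ b ∧ (ρ = I a ∨ ρ = I' a) ∧ (ρ = I b ∨ ρ = I' b)) with hDdef
  have hO2D : O2 ⊆ (D ×ˢ Kc).image (fun x : Fin 6 × Fin 7 => M x.1 x.2) := by
    intro o ho
    have hoO : o ∈ O := Finset.mem_of_mem_filter o ho
    have ho2 : (cellsOf M o).card = 2 := (Finset.mem_filter.mp ho).2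
    obtain ⟨y0, hy0, hrow0, hy0j, hy0l⟩ := hOut o hoO 0
    obtain ⟨y1, hy1, hrow1, hy1j, hy1l⟩ := hOut o hoO 1
    obtain ⟨y2, hy2, hrow2, hy2j, hy2l⟩ := hOut o hoO 2
    have key : ∃ y : Fin 6 × Fin 7, M y.1 y.2 = o ∧ y.2 ≠ j ∧ y.2 ≠ l ∧
        ∃ a b : Fin 3, a ≠ b ∧ (y.1 = I a ∨ y.1 = I' a) ∧ (y.1 = I b ∨ y.1 = I' b) := by
      by_cases e01 : y0 = y1
      · exact ⟨y0, hy0, hy0j, hy0l, 0, 1, by decide, hrow0, by rw [e01]; exact hrow1⟩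
      by_cases e02 : y0 = y2
      · exact ⟨y0, hy0, hy0j, hy0l, 0, 2, by decide, hrow0, by rw [e02]; exact hrow2⟩
      by_cases e12 : y1 = y2
      · exact ⟨y1, hy1, hy1j, hy1l, 1, 2, by decide, hrow1, by rw [e12]; exact hrow2⟩
      exfalso
      have hsub : ({y0, y1, y2} : Finset (Fin 6 × Fin 7)) ⊆ cellsOf M o := by
        intro x hx
        simp only [Finset.mem_insert, Finset.mem_singleton] at hx
        rcases hx with e | e | e <;> rw [e] <;> exact mem_cellsOf.mpr (by assumption)
      have hc3' : ({y0, y1, y2} : Finset (Fin 6 × Fin 7)).card = 3 := by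
        rw [Finset.card_insert_of_notMem (by simp [e01, e02]),
          Finset.card_insert_of_notMem (by simp [e12]), Finset.card_singleton]
      have := Finset.card_le_card hsub
      omega
    obtain ⟨y, hyo, hyj, hyl, a, b, hab, ha, hb⟩ := key
    rw [Finset.mem_image]
    refine ⟨y, ?_, hyo⟩
    rw [Finset.mem_product]
    constructor
    · rw [hDdef, Finset.mem_filter]
      exact ⟨Finset.mem_univ _, a, b, hab, ha, hb⟩
    · rw [hKcdef]; simp [hyj, hyl]
  have hO2le : O2.card ≤ D.card * 5 := by
    calc O2.card ≤ ((D ×ˢ Kc).image (fun x : Fin 6 × Fin 7 => M x.1 x.2)).card :=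
        Finset.card_le_card hO2D
      _ ≤ (D ×ˢ Kc).card := Finset.card_image_le
      _ = D.card * 5 := by rw [Finset.card_product, hKccard]
  have hD2 : 2 ≤ D.card := by omega
  obtain ⟨ρ, hρD, ρ', hρ'D, hρne⟩ := Finset.one_lt_card.mp (by omega : 1 < D.card)
  have hcoin : ∀ σ ∈ D, ∃ a b : Fin 3, σ = I a ∧ σ = I' b := by
    intro σ hσ
    rw [hDdef, Finset.mem_filter] at hσ
    obtain ⟨-, a, b, hab, ha, hb⟩ := hσ
    rcases ha with ha | ha <;> rcases hb with hb | hb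
    · exact absurd (hIinj a b (ha.symm.trans hb)) hab
    · exact ⟨a, b, ha, hb⟩
    · exact ⟨b, a, hb, ha⟩
    · exact absurd (hI'inj a b (ha.symm.trans hb)) hab
  obtain ⟨a, b, hIa, hI'b⟩ := hcoin ρ hρD
  obtain ⟨a', b', hIa', hI'b'⟩ := hcoin ρ' hρ'D
  have hbb' : b ≠ b' := by
    intro e
    exact hρne (hI'b.trans (e ▸ hI'b'.symm))
  have h3rd : ∀ b b' : Fin 3, b ≠ b' → ∃ c, c ≠ b ∧ c ≠ b' := by decide
  obtain ⟨c, hcb, hcb'⟩ := h3rd b b' hbb'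
  have hall : ∀ k b b' c : Fin 3, b ≠ b' → c ≠ b → c ≠ b' → (k = b ∨ k = b' ∨ k = c) := by
    decide
  have hfin3 : ∀ k : Fin 3, k = 0 ∨ k = 1 ∨ k = 2 := by decide
  have hRsub : R ⊆ {I 0, I 1, I 2, I' c} := by
    intro x hx
    obtain ⟨k, hk⟩ := (hmemR x).mp hx
    simp only [Finset.mem_insert, Finset.mem_singleton]
    have hIcase : ∀ a : Fin 3, x = I a → (x = I 0 ∨ x = I 1 ∨ x = I 2 ∨ x = I' c) := by
      intro a' ha'
      rcases hfin3 a' with e | e | e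
      · exact Or.inl (by rw [ha', e])
      · exact Or.inr (Or.inl (by rw [ha', e]))
      · exact Or.inr (Or.inr (Or.inl (by rw [ha', e])))
    rcases hk with hk | hk
    · exact hIcase k hk
    · rcases hall k b b' c hbb' hcb hcb' with e | e | e
      · exact hIcase a (by rw [hk, e, ← hI'b, hIa])
      · exact hIcase a' (by rw [hk, e, ← hI'b', hIa'])
      · exact Or.inr (Or.inr (Or.inr (by rw [hk, e])))
  have hr4 : R.card ≤ 4 := by
    refine le_trans (Finset.card_le_card hRsub) ?_
    refine le_trans (Finset.card_insert_le _ _) ?_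
    have h1 := Finset.card_insert_le (I 1) ({I 2, I' c} : Finset (Fin 6))
    have h2 := Finset.card_insert_le (I 2) ({I' c} : Finset (Fin 6))
    have h3 : ({I' c} : Finset (Fin 6)).card = 1 := Finset.card_singleton _
    omega
  -- no common row of all three pairs
  have hnocommon : ∀ ρ : Fin 6,
      ¬((ρ = I 0 ∨ ρ = I' 0) ∧ (ρ = I 1 ∨ ρ = I' 1) ∧ (ρ = I 2 ∨ ρ = I' 2)) := by
    rintro ρ ⟨h0 | h0, h1 | h1, h2 | h2⟩
    · exact absurd (hIinj 0 1 (h0.symm.trans h1)) (by decide)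
    · exact absurd (hIinj 0 1 (h0.symm.trans h1)) (by decide)
    · exact absurd (hIinj 0 2 (h0.symm.trans h2)) (by decide)
    · exact absurd (hI'inj 1 2 (h1.symm.trans h2)) (by decide)
    · exact absurd (hIinj 1 2 (h1.symm.trans h2)) (by decide)
    · exact absurd (hI'inj 0 2 (h0.symm.trans h2)) (by decide)
    · exact absurd (hI'inj 0 1 (h0.symm.trans h1)) (by decide)
    · exact absurd (hI'inj 0 1 (h0.symm.trans h1)) (by decide)
  set Eset : Finset C := O.filter (fun o => ∃ x : Fin 6 × Fin 7, M x.1 x.2 = o ∧ x.1 ∉ R)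
    with hEdef
  have hE3 : ∀ o ∈ Eset, 3 ≤ (cellsOf M o).card := by
    intro o ho
    rw [hEdef, Finset.mem_filter] at ho
    obtain ⟨hoO, x0, hx0o, hx0R⟩ := ho
    obtain ⟨y0, hy0, hrow0, hy0j, hy0l⟩ := hOut o hoO 0
    obtain ⟨y1, hy1, hrow1, hy1j, hy1l⟩ := hOut o hoO 1
    obtain ⟨y2, hy2, hrow2, hy2j, hy2l⟩ := hOut o hoO 2
    have hy0R : y0.1 ∈ R := by rcases hrow0 with e | e <;> rw [e] <;> [exact hIR 0; exact hI'R 0]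
    have hy1R : y1.1 ∈ R := by rcases hrow1 with e | e <;> rw [e] <;> [exact hIR 1; exact hI'R 1]
    have hy2R : y2.1 ∈ R := by rcases hrow2 with e | e <;> rw [e] <;> [exact hIR 2; exact hI'R 2]
    have key : ∃ u v : Fin 6 × Fin 7, u ≠ v ∧ u.1 ∈ R ∧ v.1 ∈ R ∧
        M u.1 u.2 = o ∧ M v.1 v.2 = o := by
      by_cases e01 : y0 = y1
      · by_cases e02 : y0 = y2
        · exfalso
          exact hnocommon y0.1 ⟨hrow0, by rw [e01]; exact hrow1, by rw [e02]; exact hrow2⟩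
        · exact ⟨y0, y2, e02, hy0R, hy2R, hy0, hy2⟩
      · exact ⟨y0, y1, e01, hy0R, hy1R, hy0, hy1⟩
    obtain ⟨u, v, huv, huR, hvR, hu, hv⟩ := key
    have hx0u : x0 ≠ u := fun e => hx0R (e ▸ huR)
    have hx0v : x0 ≠ v := fun e => hx0R (e ▸ hvR)
    have hsub : ({x0, u, v} : Finset (Fin 6 × Fin 7)) ⊆ cellsOf M o := by
      intro x hx
      simp only [Finset.mem_insert, Finset.mem_singleton] at hx
      rcases hx with e | e | e <;> rw [e] <;> exact mem_cellsOf.mpr (by assumption)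
    have hc3' : ({x0, u, v} : Finset (Fin 6 × Fin 7)).card = 3 := by
      rw [Finset.card_insert_of_notMem (by simp [hx0u, hx0v]),
        Finset.card_insert_of_notMem (by simp [huv]), Finset.card_singleton]
    calc 3 = _ := hc3'.symm
      _ ≤ _ := Finset.card_le_card hsub
  have hEc4 : Eset.card ≤ 4 := by
    have hT := sum_T_le M hM hC Eset
    have := Finset.card_nsmul_le_sum Eset _ 3 hE3
    simp only [smul_eq_mul] at this
    omega
  set W : Finset (Fin 6) := Rᶜ with hWdef
  have hWcard : W.card = 6 - R.card := by
    rw [hWdef, Finset.card_compl]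
    simp
  have hwR : ∀ w ∈ W, w ∉ R := fun w hw => Finset.mem_compl.mp hw
  have hpj_ne_cs : ∀ w ∈ W, ∀ k, M w j ≠ cs k := by
    intro w hw k e
    have hm : (w, j) ∈ cellsOf M (cs k) := mem_cellsOf.mpr e
    rw [hcells k] at hm
    simp only [Finset.mem_insert, Finset.mem_singleton, Prod.mk.injEq] at hm
    rcases hm with ⟨e1, _⟩ | ⟨_, e2⟩
    · exact (hwR w hw) (e1 ▸ hIR k)
    · exact h e2
  have hql_ne_cs : ∀ w ∈ W, ∀ k, M w l ≠ cs k := by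
    intro w hw k e
    have hm : (w, l) ∈ cellsOf M (cs k) := mem_cellsOf.mpr e
    rw [hcells k] at hm
    simp only [Finset.mem_insert, Finset.mem_singleton, Prod.mk.injEq] at hm
    rcases hm with ⟨_, e2⟩ | ⟨e1, _⟩
    · exact h e2.symm
    · exact (hwR w hw) (e1 ▸ hI'R k)
  have hpj_notY : ∀ w ∈ W, ∀ i, M i l ≠ M w j := by
    intro w hw i e
    obtain ⟨k, hk⟩ := hsharedcs (M w j) ((hmemX _).mpr ⟨w, rfl⟩) ((hmemY _).mpr ⟨i, e⟩)
    exact hpj_ne_cs w hw k hk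
  have hql_notX : ∀ w ∈ W, ∀ i, M i j ≠ M w l := by
    intro w hw i e
    obtain ⟨k, hk⟩ := hsharedcs (M w l) ((hmemX _).mpr ⟨i, e⟩) ((hmemY _).mpr ⟨w, rfl⟩)
    exact hql_ne_cs w hw k hk
  have hpj_notO : ∀ w : Fin 6, M w j ∉ O := fun w ho => ((hmemO _).mp ho).1 w rfl
  have hql_notO : ∀ w : Fin 6, M w l ∉ O := fun w ho => ((hmemO _).mp ho).2 w rfl
  have hcovj : ∀ w ∈ W, 10 ≤ Eset.card + ((cellsOf M (M w j)).card - 1) * R.card := by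
    intro w hw
    have hsub : O ⊆ Eset ∪ (cellsOf M (M w j) \ {(w, j)}).biUnion
        (fun x => R.image (fun ρ => M ρ x.2)) := by
      intro o hoO
      have hone : M w j ≠ o := fun e => hpj_notO w (e ▸ hoO)
      rcases hM.2.2 (M w j) o hone with ⟨r, x, y, hx, hy⟩ | ⟨r1, r2, y, h1, h2⟩
      · by_cases hrR : r ∈ R
        · exfalso
          by_cases hxj : x = j
          · rw [hxj] at hx
            exact (hwR w hw) ((hM.2.1 j hx) ▸ hrR)
          · by_cases hxl : x = l
            · rw [hxl] at hx
              exact hpj_notY w hw r hx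
            · have hmem := hRsat r x hrR hxj hxl
              rw [hx] at hmem
              exact hpj_notO w hmem
        · apply Finset.mem_union_left
          rw [hEdef, Finset.mem_filter]
          exact ⟨hoO, (r, y), hy, hrR⟩
      · by_cases hyj : y = j
        · exact absurd (hyj ▸ h2) (((hmemO o).mp hoO).1 r2)
        by_cases hyl : y = l
        · exact absurd (hyl ▸ h1) (hpj_notY w hw r1)
        by_cases hr2R : r2 ∈ R
        · apply Finset.mem_union_right
          rw [Finset.mem_biUnion]
          refine ⟨(r1, y), ?_, ?_⟩
          · rw [Finset.mem_sdiff]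
            refine ⟨mem_cellsOf.mpr h1, ?_⟩
            simp only [Finset.mem_singleton, Prod.mk.injEq, not_and]
            intro _
            exact hyj
          · rw [Finset.mem_image]
            exact ⟨r2, hr2R, h2⟩
        · apply Finset.mem_union_left
          rw [hEdef, Finset.mem_filter]
          exact ⟨hoO, (r2, y), h2, hr2R⟩
    have hwj : (w, j) ∈ cellsOf M (M w j) := mem_cellsOf.mpr rfl
    have hsd : (cellsOf M (M w j) \ {(w, j)}).card = (cellsOf M (M w j)).card - 1 := by
      rw [Finset.card_sdiff_of_subset (Finset.singleton_subset_iff.mpr hwj), Finset.card_singleton]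
    calc (10 : ℕ) = O.card := hOcard.symm
      _ ≤ _ := Finset.card_le_card hsub
      _ ≤ Eset.card + ((cellsOf M (M w j) \ {(w, j)}).biUnion
          (fun x => R.image (fun ρ => M ρ x.2))).card := Finset.card_union_le _ _
      _ ≤ Eset.card + ∑ x ∈ cellsOf M (M w j) \ {(w, j)},
          (R.image (fun ρ => M ρ x.2)).card :=
        Nat.add_le_add_left (Finset.card_biUnion_le) _
      _ ≤ Eset.card + ∑ _x ∈ cellsOf M (M w j) \ {(w, j)}, R.card :=
        Nat.add_le_add_left (Finset.sum_le_sum fun x _ => Finset.card_image_le) _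
      _ = Eset.card + ((cellsOf M (M w j)).card - 1) * R.card := by
        rw [Finset.sum_const, smul_eq_mul, hsd]
  have hcovl : ∀ w ∈ W, 10 ≤ Eset.card + ((cellsOf M (M w l)).card - 1) * R.card := by
    intro w hw
    have hsub : O ⊆ Eset ∪ (cellsOf M (M w l) \ {(w, l)}).biUnion
        (fun x => R.image (fun ρ => M ρ x.2)) := by
      intro o hoO
      have hone : M w l ≠ o := fun e => hql_notO w (e ▸ hoO)
      rcases hM.2.2 (M w l) o hone with ⟨r, x, y, hx, hy⟩ | ⟨r1, r2, y, h1, h2⟩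
      · by_cases hrR : r ∈ R
        · exfalso
          by_cases hxl : x = l
          · rw [hxl] at hx
            exact (hwR w hw) ((hM.2.1 l hx) ▸ hrR)
          · by_cases hxj : x = j
            · rw [hxj] at hx
              exact hql_notX w hw r hx
            · have hmem := hRsat r x hrR hxj hxl
              rw [hx] at hmem
              exact hql_notO w hmem
        · apply Finset.mem_union_left
          rw [hEdef, Finset.mem_filter]
          exact ⟨hoO, (r, y), hy, hrR⟩
      · by_cases hyl : y = l
        · exact absurd (hyl ▸ h2) (((hmemO o).mp hoO).2 r2)
        by_cases hyj : y = j
        · exact absurd (hyj ▸ h1) (hql_notX w hw r1)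
        by_cases hr2R : r2 ∈ R
        · apply Finset.mem_union_right
          rw [Finset.mem_biUnion]
          refine ⟨(r1, y), ?_, ?_⟩
          · rw [Finset.mem_sdiff]
            refine ⟨mem_cellsOf.mpr h1, ?_⟩
            simp only [Finset.mem_singleton, Prod.mk.injEq, not_and]
            intro _
            exact hyl
          · rw [Finset.mem_image]
            exact ⟨r2, hr2R, h2⟩
        · apply Finset.mem_union_left
          rw [hEdef, Finset.mem_filter]
          exact ⟨hoO, (r2, y), h2, hr2R⟩
    have hwl : (w, l) ∈ cellsOf M (M w l) := mem_cellsOf.mpr rfl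
    have hsd : (cellsOf M (M w l) \ {(w, l)}).card = (cellsOf M (M w l)).card - 1 := by
      rw [Finset.card_sdiff_of_subset (Finset.singleton_subset_iff.mpr hwl), Finset.card_singleton]
    calc (10 : ℕ) = O.card := hOcard.symm
      _ ≤ _ := Finset.card_le_card hsub
      _ ≤ Eset.card + ((cellsOf M (M w l) \ {(w, l)}).biUnion
          (fun x => R.image (fun ρ => M ρ x.2))).card := Finset.card_union_le _ _
      _ ≤ Eset.card + ∑ x ∈ cellsOf M (M w l) \ {(w, l)},
          (R.image (fun ρ => M ρ x.2)).card :=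
        Nat.add_le_add_left (Finset.card_biUnion_le) _
      _ ≤ Eset.card + ∑ _x ∈ cellsOf M (M w l) \ {(w, l)}, R.card :=
        Nat.add_le_add_left (Finset.sum_le_sum fun x _ => Finset.card_image_le) _
      _ = Eset.card + ((cellsOf M (M w l)).card - 1) * R.card := by
        rw [Finset.sum_const, smul_eq_mul, hsd]
  set Sp : ℕ := ∑ w ∈ W, ((cellsOf M (M w j)).card - 1) with hSpdef
  set Sq : ℕ := ∑ w ∈ W, ((cellsOf M (M w l)).card - 1) with hSqdef
  have hsumj : 10 * W.card ≤ Eset.card * W.card + Sp * R.card := by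
    calc 10 * W.card = ∑ _w ∈ W, 10 := by rw [Finset.sum_const, smul_eq_mul, mul_comm]
      _ ≤ ∑ w ∈ W, (Eset.card + ((cellsOf M (M w j)).card - 1) * R.card) :=
        Finset.sum_le_sum hcovj
      _ = ∑ _w ∈ W, Eset.card + ∑ w ∈ W, ((cellsOf M (M w j)).card - 1) * R.card :=
        Finset.sum_add_distrib
      _ = Eset.card * W.card + Sp * R.card := by
        rw [Finset.sum_const, smul_eq_mul, mul_comm, hSpdef, ← Finset.sum_mul]
  have hsuml : 10 * W.card ≤ Eset.card * W.card + Sq * R.card := by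
    calc 10 * W.card = ∑ _w ∈ W, 10 := by rw [Finset.sum_const, smul_eq_mul, mul_comm]
      _ ≤ ∑ w ∈ W, (Eset.card + ((cellsOf M (M w l)).card - 1) * R.card) :=
        Finset.sum_le_sum hcovl
      _ = ∑ _w ∈ W, Eset.card + ∑ w ∈ W, ((cellsOf M (M w l)).card - 1) * R.card :=
        Finset.sum_add_distrib
      _ = Eset.card * W.card + Sq * R.card := by
        rw [Finset.sum_const, smul_eq_mul, mul_comm, hSqdef, ← Finset.sum_mul]
  have hEO : Eset ⊆ O := Finset.filter_subset _ _
  have hdisj1 : Disjoint (W.image fun w => M w j) (W.image fun w => M w l) := by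
    rw [Finset.disjoint_left]
    intro x hx1 hx2
    obtain ⟨w, hw, rfl⟩ := Finset.mem_image.mp hx1
    obtain ⟨w', hw', e⟩ := Finset.mem_image.mp hx2
    exact hpj_notY w hw w' e
  have hdisj2 : Disjoint (W.image fun w => M w j) Eset := by
    rw [Finset.disjoint_left]
    intro x hx1 hx2
    obtain ⟨w, hw, rfl⟩ := Finset.mem_image.mp hx1
    exact hpj_notO w (hEO hx2)
  have hdisj3 : Disjoint (W.image fun w => M w l) Eset := by
    rw [Finset.disjoint_left]
    intro x hx1 hx2
    obtain ⟨w, hw, rfl⟩ := Finset.mem_image.mp hx1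
    exact hql_notO w (hEO hx2)
  set T : Finset C := ((W.image fun w => M w j) ∪ (W.image fun w => M w l)) ∪ Eset with hTdef
  have hdisj4 : Disjoint ((W.image fun w => M w j) ∪ (W.image fun w => M w l)) Eset :=
    Finset.disjoint_union_left.mpr ⟨hdisj2, hdisj3⟩
  have hTcard : T.card = W.card + W.card + Eset.card := by
    rw [hTdef, Finset.card_union_of_disjoint hdisj4, Finset.card_union_of_disjoint hdisj1,
      Finset.card_image_of_injective _ (hM.2.1 j), Finset.card_image_of_injective _ (hM.2.1 l)]
  have hTsum : ∑ c ∈ T, (cellsOf M c).card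
      = ∑ w ∈ W, (cellsOf M (M w j)).card + ∑ w ∈ W, (cellsOf M (M w l)).card
        + ∑ c ∈ Eset, (cellsOf M c).card := by
    rw [hTdef, Finset.sum_union hdisj4, Finset.sum_union hdisj1,
      Finset.sum_image (fun x _ y _ e => hM.2.1 j e),
      Finset.sum_image (fun x _ y _ e => hM.2.1 l e)]
  have hTle := sum_T_le M hM hC T
  have hEsum : 3 * Eset.card ≤ ∑ c ∈ Eset, (cellsOf M c).card := by
    have := Finset.card_nsmul_le_sum Eset _ 3 hE3
    simpa [smul_eq_mul, mul_comm] using this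
  have hSplink : ∑ w ∈ W, (cellsOf M (M w j)).card = Sp + W.card := by
    calc ∑ w ∈ W, (cellsOf M (M w j)).card
        = ∑ w ∈ W, (((cellsOf M (M w j)).card - 1) + 1) := by
          refine Finset.sum_congr rfl fun w _ => ?_
          have := two_le_card M hM hC (M w j)
          omega
      _ = ∑ w ∈ W, ((cellsOf M (M w j)).card - 1) + ∑ _w ∈ W, 1 := Finset.sum_add_distrib
      _ = Sp + W.card := by rw [Finset.sum_const, smul_eq_mul, mul_one, hSpdef]
  have hSqlink : ∑ w ∈ W, (cellsOf M (M w l)).card = Sq + W.card := by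
    calc ∑ w ∈ W, (cellsOf M (M w l)).card
        = ∑ w ∈ W, (((cellsOf M (M w l)).card - 1) + 1) := by
          refine Finset.sum_congr rfl fun w _ => ?_
          have := two_le_card M hM hC (M w l)
          omega
      _ = ∑ w ∈ W, ((cellsOf M (M w l)).card - 1) + ∑ _w ∈ W, 1 := Finset.sum_add_distrib
      _ = Sq + W.card := by rw [Finset.sum_const, smul_eq_mul, mul_one, hSqdef]
  have hslack : Sp + Sq + Eset.card ≤ 4 + 2 * W.card := by
    rw [hTsum, hSplink, hSqlink] at hTle
    rw [hTcard] at hTle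
    omega
  have hrcase : R.card = 3 ∨ R.card = 4 := by omega
  rcases hrcase with hre | hre
  · rw [hre] at hWcard hsumj hsuml
    norm_num at hWcard
    rw [hWcard] at hsumj hsuml hslack
    omega
  · rw [hre] at hWcard hsumj hsuml
    norm_num at hWcard
    rw [hWcard] at hsumj hsuml hslack
    omega
end

section
/- If M ∈ 𝓜(6,7,C) with |C| = 19, then for any two distinct rows i, k ∈ [1,6], the number of colours of frequency 2 appearing in both row i and row k is at most 2. -/
open Finset

set_option maxHeartbeats 1000000

attribute [local instance] Classical.propDecidable

noncomputable section

namespace SharedRows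

structure Setup (C : Type*) [Fintype C] : Type _ where
  M : Fin 6 → Fin 7 → C
  hrow : ∀ r, Function.Injective (M r)
  hcol : ∀ j, Function.Injective fun r => M r j
  hlink : ∀ c₁ c₂ : C, c₁ ≠ c₂ →
    (∃ r j₁ j₂, M r j₁ = c₁ ∧ M r j₂ = c₂) ∨
    (∃ r₁ r₂ j, M r₁ j = c₁ ∧ M r₂ j = c₂)
  hC : Fintype.card C = 19
  i : Fin 6
  k : Fin 6
  hik : i ≠ k
  c : Fin 3 → C
  a : Fin 3 → Fin 7
  b : Fin 3 → Fin 7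
  hcinj : Function.Injective c
  hca : ∀ t, M i (a t) = c t
  hcb : ∀ t, M k (b t) = c t
  hcell : ∀ t r j, M r j = c t → (r = i ∧ j = a t) ∨ (r = k ∧ j = b t)

namespace Setup

variable {C : Type*} [Fintype C] (X : Setup C)


/-- rows other than i,k -/
def Rset : Finset (Fin 6) := Finset.univ \ {X.i, X.k}

def Scols : Finset (Fin 7) := Finset.univ.image X.a ∪ Finset.univ.image X.b

def NonS : Finset (Fin 7) := Finset.univ \ X.Scols

def Tset : Finset C := Finset.univ.image (X.M X.i) ∪ Finset.univ.image (X.M X.k)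

def D : Finset C := Finset.univ \ X.Tset

def cset : Finset C := Finset.univ.image X.c

def Eset : Finset C := ((Finset.univ : Finset (Fin 7)) \ Finset.univ.image X.a).image (X.M X.i)

def Fset : Finset C := ((Finset.univ : Finset (Fin 7)) \ Finset.univ.image X.b).image (X.M X.k)

def EF : Finset C := X.Eset ∪ X.Fset

def Xreg : Finset (Fin 6 × Fin 7) := X.Rset ×ˢ X.NonS

def SReg : Finset (Fin 6 × Fin 7) := X.Rset ×ˢ X.Scols

def pairCells (t : Fin 3) : Finset (Fin 6 × Fin 7) := X.Rset ×ˢ ({X.a t, X.b t} : Finset (Fin 7))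

def flip : Setup C where
  M := X.M
  hrow := X.hrow
  hcol := X.hcol
  hlink := X.hlink
  hC := X.hC
  i := X.k
  k := X.i
  hik := X.hik.symm
  c := X.c
  a := X.b
  b := X.a
  hcinj := X.hcinj
  hca := X.hcb
  hcb := X.hca
  hcell := by
    intro t r j hrj
    rcases X.hcell t r j hrj with h | h
    · exact Or.inr h
    · exact Or.inl h

@[simp] lemma flip_M : X.flip.M = X.M := rfl
@[simp] lemma flip_i : X.flip.i = X.k := rfl
@[simp] lemma flip_k : X.flip.k = X.i := rfl
@[simp] lemma flip_Rset : X.flip.Rset = X.Rset := by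
  unfold Rset flip
  congr 1
  ext r
  simp only [Finset.mem_insert, Finset.mem_singleton]
  tauto
@[simp] lemma flip_Scols : X.flip.Scols = X.Scols := by
  unfold Scols flip; simp [Finset.union_comm]
@[simp] lemma flip_NonS : X.flip.NonS = X.NonS := by
  unfold NonS; rw [flip_Scols]
@[simp] lemma flip_Tset : X.flip.Tset = X.Tset := by
  unfold Tset flip; simp [Finset.union_comm]
@[simp] lemma flip_D : X.flip.D = X.D := by
  unfold D; rw [flip_Tset]
@[simp] lemma flip_Eset : X.flip.Eset = X.Fset := rfl
@[simp] lemma flip_Fset : X.flip.Fset = X.Eset := rfl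
@[simp] lemma flip_EF : X.flip.EF = X.EF := by
  unfold EF; rw [flip_Eset, flip_Fset, Finset.union_comm]
@[simp] lemma flip_Xreg : X.flip.Xreg = X.Xreg := by
  unfold Xreg; rw [flip_Rset, flip_NonS]
@[simp] lemma flip_SReg : X.flip.SReg = X.SReg := by
  unfold SReg; rw [flip_Rset, flip_Scols]

lemma mem_Rset {r : Fin 6} : r ∈ X.Rset ↔ r ≠ X.i ∧ r ≠ X.k := by
  unfold Rset
  simp only [Finset.mem_sdiff, Finset.mem_univ, true_and, Finset.mem_insert, Finset.mem_singleton]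
  tauto

lemma card_Rset : X.Rset.card = 4 := by
  unfold Rset
  rw [Finset.card_sdiff_of_subset (Finset.subset_univ _)]
  have : ({X.i, X.k} : Finset (Fin 6)).card = 2 := by
    rw [Finset.card_insert_of_notMem (by simp [X.hik]), Finset.card_singleton]
  simp [this]

lemma a_inj : Function.Injective X.a := by
  intro t t' h
  apply X.hcinj
  rw [← X.hca t, ← X.hca t', h]

lemma b_inj : Function.Injective X.b := by
  intro t t' h
  apply X.hcinj
  rw [← X.hcb t, ← X.hcb t', h]

lemma a_ne_b (t : Fin 3) : X.a t ≠ X.b t := by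
  intro h
  apply X.hik
  apply X.hcol (X.a t)
  show X.M X.i (X.a t) = X.M X.k (X.a t)
  rw [X.hca t, h, X.hcb t]

lemma card_a_image : (Finset.univ.image X.a).card = 3 := by
  rw [Finset.card_image_of_injective _ X.a_inj]; simp

lemma card_b_image : (Finset.univ.image X.b).card = 3 := by
  rw [Finset.card_image_of_injective _ X.b_inj]; simp

lemma mem_Scols {j : Fin 7} : j ∈ X.Scols ↔ (∃ t, X.a t = j) ∨ (∃ t, X.b t = j) := by
  unfold Scols; simp

lemma row_i_mem_T (j : Fin 7) : X.M X.i j ∈ X.Tset := by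
  unfold Tset; simp

lemma row_k_mem_T (j : Fin 7) : X.M X.k j ∈ X.Tset := by
  unfold Tset; simp

lemma c_mem_T (t : Fin 3) : X.c t ∈ X.Tset := by
  rw [← X.hca t]; exact X.row_i_mem_T _

lemma D_rows {d : C} (hd : d ∈ X.D) {r : Fin 6} {j : Fin 7} (h : X.M r j = d) : r ∈ X.Rset := by
  rw [X.mem_Rset]
  unfold D at hd
  simp at hd
  constructor
  · rintro rfl; exact hd (by rw [← h]; exact X.row_i_mem_T j)
  · rintro rfl; exact hd (by rw [← h]; exact X.row_k_mem_T j)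

lemma D_not_T {d : C} (hd : d ∈ X.D) : d ∉ X.Tset := by
  unfold D at hd; simp at hd; exact hd

lemma Tsub : X.Tset ⊆ X.cset ∪ X.Eset ∪ X.Fset := by
  intro x hx
  unfold Tset at hx
  simp only [Finset.mem_union, Finset.mem_image, Finset.mem_univ, true_and] at hx
  rcases hx with ⟨j, rfl⟩ | ⟨j, rfl⟩
  · by_cases hj : j ∈ Finset.univ.image X.a
    · simp only [Finset.mem_image, Finset.mem_univ, true_and] at hj
      obtain ⟨t, rfl⟩ := hj
      rw [X.hca t]
      simp [cset, Finset.mem_union]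
    · simp only [Finset.mem_union]
      left; right
      unfold Eset
      exact Finset.mem_image_of_mem _ (by simp [hj])
  · by_cases hj : j ∈ Finset.univ.image X.b
    · simp only [Finset.mem_image, Finset.mem_univ, true_and] at hj
      obtain ⟨t, rfl⟩ := hj
      rw [X.hcb t]
      simp [cset, Finset.mem_union]
    · simp only [Finset.mem_union]
      right
      unfold Fset
      exact Finset.mem_image_of_mem _ (by simp [hj])

lemma card_cset : X.cset.card = 3 := by
  unfold cset
  rw [Finset.card_image_of_injective _ X.hcinj]; simp

lemma card_Eset_le : X.Eset.card ≤ 4 := by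
  unfold Eset
  calc _ ≤ ((Finset.univ : Finset (Fin 7)) \ Finset.univ.image X.a).card := Finset.card_image_le
  _ = 4 := by rw [Finset.card_sdiff_of_subset (Finset.subset_univ _), X.card_a_image]; simp

lemma card_Fset_le : X.Fset.card ≤ 4 := by
  unfold Fset
  calc _ ≤ ((Finset.univ : Finset (Fin 7)) \ Finset.univ.image X.b).card := Finset.card_image_le
  _ = 4 := by rw [Finset.card_sdiff_of_subset (Finset.subset_univ _), X.card_b_image]; simp

lemma card_T_le : X.Tset.card ≤ 11 := by
  calc X.Tset.card ≤ (X.cset ∪ X.Eset ∪ X.Fset).card := Finset.card_le_card X.Tsub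
  _ ≤ (X.cset ∪ X.Eset).card + X.Fset.card := Finset.card_union_le _ _
  _ ≤ X.cset.card + X.Eset.card + X.Fset.card := by
      have := Finset.card_union_le X.cset X.Eset; omega
  _ ≤ 11 := by
      have := X.card_cset; have := X.card_Eset_le; have := X.card_Fset_le; omega

lemma card_D_ge : 8 ≤ X.D.card := by
  unfold D
  rw [Finset.card_sdiff_of_subset (Finset.subset_univ _), Finset.card_univ, X.hC]
  have := X.card_T_le
  omega


lemma card_pairCells (t : Fin 3) : (X.pairCells t).card = 8 := by
  unfold pairCells
  rw [Finset.card_product, X.card_Rset]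
  have h2 : ({X.a t, X.b t} : Finset (Fin 7)).card = 2 := by
    rw [Finset.card_insert_of_notMem (by simp [X.a_ne_b t]), Finset.card_singleton]
  rw [h2]

lemma D_sub_pair (t : Fin 3) : X.D ⊆ (X.pairCells t).image (fun p => X.M p.1 p.2) := by
  intro d hd
  have hne : X.c t ≠ d := fun h => X.D_not_T hd (h ▸ X.c_mem_T t)
  rcases X.hlink (X.c t) d hne with ⟨r, j₁, j₂, h₁, h₂⟩ | ⟨r₁, r₂, j, h₁, h₂⟩
  · rcases X.hcell t r j₁ h₁ with ⟨rfl, -⟩ | ⟨rfl, -⟩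
    · exact absurd (by rw [← h₂]; exact X.row_i_mem_T j₂) (X.D_not_T hd)
    · exact absurd (by rw [← h₂]; exact X.row_k_mem_T j₂) (X.D_not_T hd)
  · have hr₂ : r₂ ∈ X.Rset := X.D_rows hd h₂
    have hj : j = X.a t ∨ j = X.b t := by
      rcases X.hcell t r₁ j h₁ with ⟨-, rfl⟩ | ⟨-, rfl⟩
      · left; rfl
      · right; rfl
    refine Finset.mem_image.mpr ⟨(r₂, j), ?_, h₂⟩
    unfold pairCells
    rw [Finset.mem_product]
    refine ⟨hr₂, by simp [hj]⟩

lemma card_D : X.D.card = 8 := by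
  have h1 := X.card_D_ge
  have h2 : X.D.card ≤ 8 := by
    calc X.D.card ≤ ((X.pairCells 0).image (fun p => X.M p.1 p.2)).card :=
          Finset.card_le_card (X.D_sub_pair 0)
    _ ≤ (X.pairCells 0).card := Finset.card_image_le
    _ = 8 := X.card_pairCells 0
  omega

lemma D_eq_pair_image (t : Fin 3) :
    (X.pairCells t).image (fun p => X.M p.1 p.2) = X.D := by
  refine (Finset.eq_of_subset_of_card_le (X.D_sub_pair t) ?_).symm
  calc ((X.pairCells t).image (fun p => X.M p.1 p.2)).card
      ≤ (X.pairCells t).card := Finset.card_image_le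
  _ = 8 := X.card_pairCells t
  _ = X.D.card := X.card_D.symm

lemma pair_colors {t : Fin 3} {p : Fin 6 × Fin 7} (hp : p ∈ X.pairCells t) :
    X.M p.1 p.2 ∈ X.D := by
  rw [← X.D_eq_pair_image t]
  exact Finset.mem_image_of_mem _ hp

lemma card_T_eq : X.Tset.card = 11 := by
  have h1 : X.D.card = Fintype.card C - X.Tset.card := by
    unfold D
    rw [Finset.card_sdiff_of_subset (Finset.subset_univ _), Finset.card_univ]
  have := X.card_D
  have := X.card_T_le
  rw [X.hC] at h1
  omega

lemma T_eq : X.Tset = X.cset ∪ X.EF := by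
  apply Finset.Subset.antisymm
  · intro x hx
    have := X.Tsub hx
    unfold EF
    simp only [Finset.mem_union] at this ⊢
    tauto
  · intro x hx
    simp only [EF, Finset.mem_union] at hx
    rcases hx with hx | hx | hx
    · simp only [cset, Finset.mem_image] at hx
      obtain ⟨t, -, rfl⟩ := hx
      exact X.c_mem_T t
    · simp only [Eset, Finset.mem_image] at hx
      obtain ⟨j, -, rfl⟩ := hx
      exact X.row_i_mem_T j
    · simp only [Fset, Finset.mem_image] at hx
      obtain ⟨j, -, rfl⟩ := hx
      exact X.row_k_mem_T j

lemma EF_struct : X.EF.card = 8 ∧ (X.cset ∩ X.EF).card = 0 ∧ (X.Eset ∩ X.Fset).card = 0 := by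
  have h1 : (X.cset ∪ X.EF).card + (X.cset ∩ X.EF).card = X.cset.card + X.EF.card :=
    Finset.card_union_add_card_inter _ _
  have h2 : (X.Eset ∪ X.Fset).card + (X.Eset ∩ X.Fset).card = X.Eset.card + X.Fset.card :=
    Finset.card_union_add_card_inter _ _
  have h3 : X.Tset.card = (X.cset ∪ X.EF).card := by rw [X.T_eq]
  have h4 := X.card_T_eq
  have h5 := X.card_cset
  have h6 := X.card_Eset_le
  have h7 := X.card_Fset_le
  have h8 : (X.Eset ∪ X.Fset).card = X.EF.card := rfl
  omega

lemma card_EF : X.EF.card = 8 := X.EF_struct.1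

lemma cset_EF_disj {x : C} (hx : x ∈ X.EF) : ∀ t, X.c t ≠ x := by
  intro t h
  have h0 : X.c t ∈ X.cset := by simp [cset]
  have hmem : X.c t ∈ X.cset ∩ X.EF := Finset.mem_inter.mpr ⟨h0, h ▸ hx⟩
  have hz := X.EF_struct.2.1
  rw [Finset.card_eq_zero] at hz
  rw [hz] at hmem
  simp at hmem

lemma E_F_disj {x : C} (hx : x ∈ X.Eset) (hx' : x ∈ X.Fset) : False := by
  have : x ∈ X.Eset ∩ X.Fset := Finset.mem_inter.mpr ⟨hx, hx'⟩
  have h := X.EF_struct.2.2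
  rw [Finset.card_eq_zero] at h
  rw [h] at this
  simp at this

lemma EF_sub_T : X.EF ⊆ X.Tset := by
  rw [X.T_eq]; exact Finset.subset_union_right

lemma EF_not_D {x : C} (hx : x ∈ X.EF) : x ∉ X.D :=
  fun hd => X.D_not_T hd (X.EF_sub_T hx)

lemma cols_clash {j : Fin 7} (h0 : j = X.a 0 ∨ j = X.b 0) (h1 : j = X.a 1 ∨ j = X.b 1)
    (h2 : j = X.a 2 ∨ j = X.b 2) : False := by
  rcases h0 with h0 | h0 <;> rcases h1 with h1 | h1 <;> rcases h2 with h2 | h2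
  · exact absurd (X.a_inj (h0.symm.trans h1)) (by decide)
  · exact absurd (X.a_inj (h0.symm.trans h1)) (by decide)
  · exact absurd (X.a_inj (h0.symm.trans h2)) (by decide)
  · exact absurd (X.b_inj (h1.symm.trans h2)) (by decide)
  · exact absurd (X.a_inj (h1.symm.trans h2)) (by decide)
  · exact absurd (X.b_inj (h0.symm.trans h2)) (by decide)
  · exact absurd (X.b_inj (h0.symm.trans h1)) (by decide)
  · exact absurd (X.b_inj (h0.symm.trans h1)) (by decide)

lemma pair_sub_SReg (t : Fin 3) : X.pairCells t ⊆ X.SReg := by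
  intro p hp
  unfold pairCells at hp
  unfold SReg
  rw [Finset.mem_product] at hp ⊢
  refine ⟨hp.1, ?_⟩
  rw [X.mem_Scols]
  have := hp.2
  simp only [Finset.mem_insert, Finset.mem_singleton] at this
  rcases this with h | h
  · exact Or.inl ⟨t, h.symm⟩
  · exact Or.inr ⟨t, h.symm⟩

lemma SReg_colors {p : Fin 6 × Fin 7} (hp : p ∈ X.SReg) : X.M p.1 p.2 ∈ X.D := by
  unfold SReg at hp
  rw [Finset.mem_product] at hp
  have := hp.2
  rw [X.mem_Scols] at this
  have : ∃ t, p.2 = X.a t ∨ p.2 = X.b t := by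
    rcases this with ⟨t, ht⟩ | ⟨t, ht⟩
    · exact ⟨t, Or.inl ht.symm⟩
    · exact ⟨t, Or.inr ht.symm⟩
  obtain ⟨t, ht⟩ := this
  refine X.pair_colors (t := t) ?_
  unfold pairCells
  rw [Finset.mem_product]
  exact ⟨hp.1, by simp [ht]⟩

lemma fib_two_le {d : C} (hd : d ∈ X.D) :
    2 ≤ (X.SReg.filter (fun p => X.M p.1 p.2 = d)).card := by
  have get : ∀ t : Fin 3, ∃ p, p ∈ X.pairCells t ∧ X.M p.1 p.2 = d := by
    intro t
    have := X.D_sub_pair t hd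
    rw [Finset.mem_image] at this
    obtain ⟨p, hp, hpd⟩ := this
    exact ⟨p, hp, hpd⟩
  obtain ⟨q0, hq0, hq0d⟩ := get 0
  obtain ⟨q1, hq1, hq1d⟩ := get 1
  obtain ⟨q2, hq2, hq2d⟩ := get 2
  have hcols : ∀ t (q : Fin 6 × Fin 7), q ∈ X.pairCells t → q.2 = X.a t ∨ q.2 = X.b t := by
    intro t q hq
    unfold pairCells at hq
    rw [Finset.mem_product] at hq
    have := hq.2
    simp only [Finset.mem_insert, Finset.mem_singleton] at this
    exact this
  have hne : q0 ≠ q1 ∨ q0 ≠ q2 := by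
    by_contra hcon
    push_neg at hcon
    obtain ⟨e1, e2⟩ := hcon
    exact X.cols_clash (hcols 0 q0 hq0) (e1 ▸ hcols 1 q1 hq1) (e2 ▸ hcols 2 q2 hq2)
  rw [Nat.succ_le_iff, Finset.one_lt_card]
  rcases hne with hne | hne
  · exact ⟨q0, by simp [Finset.mem_filter, X.pair_sub_SReg 0 hq0, hq0d],
      q1, by simp [Finset.mem_filter, X.pair_sub_SReg 1 hq1, hq1d], hne⟩
  · exact ⟨q0, by simp [Finset.mem_filter, X.pair_sub_SReg 0 hq0, hq0d],
      q2, by simp [Finset.mem_filter, X.pair_sub_SReg 2 hq2, hq2d], hne⟩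

lemma card_SReg : X.SReg.card = 4 * X.Scols.card := by
  unfold SReg
  rw [Finset.card_product, X.card_Rset]

lemma sum_fib : X.SReg.card = ∑ d ∈ X.D, (X.SReg.filter (fun p => X.M p.1 p.2 = d)).card :=
  Finset.card_eq_sum_card_fiberwise (fun p hp => X.SReg_colors hp)

lemma card_Scols_ge : 4 ≤ X.Scols.card := by
  have h1 : 16 ≤ ∑ d ∈ X.D, (X.SReg.filter (fun p => X.M p.1 p.2 = d)).card := by
    have := Finset.card_nsmul_le_sum X.D
      (fun d => (X.SReg.filter (fun p => X.M p.1 p.2 = d)).card) 2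
      (fun d hd => X.fib_two_le hd)
    rw [X.card_D] at this
    simpa using this
  have h2 := X.sum_fib
  have h3 := X.card_SReg
  omega


lemma mem_NonS {j : Fin 7} : j ∈ X.NonS ↔ ¬ j ∈ X.Scols := by
  unfold NonS; simp

lemma mem_Xreg {p : Fin 6 × Fin 7} : p ∈ X.Xreg ↔ p.1 ∈ X.Rset ∧ p.2 ∈ X.NonS := by
  unfold Xreg; rw [Finset.mem_product]

lemma Xreg_colors {p : Fin 6 × Fin 7} (hp : p ∈ X.Xreg) :
    X.M p.1 p.2 ∈ X.D ∨ X.M p.1 p.2 ∈ X.EF := by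
  by_cases hT : X.M p.1 p.2 ∈ X.Tset
  · right
    rw [X.T_eq] at hT
    rcases Finset.mem_union.mp hT with hc | hEF
    · exfalso
      simp only [cset, Finset.mem_image, Finset.mem_univ, true_and] at hc
      obtain ⟨t, ht⟩ := hc
      rcases X.hcell t p.1 p.2 ht.symm with ⟨h1, -⟩ | ⟨h1, -⟩ <;>
      · rw [X.mem_Xreg] at hp
        rw [X.mem_Rset] at hp
        exact absurd h1 (by tauto)
    · exact hEF
  · left
    unfold D
    simp [hT]

lemma Ecell {x : C} (hx : x ∈ X.Eset) {r : Fin 6} {j : Fin 7} (h : X.M r j = x) :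
    r = X.i ∨ (r, j) ∈ X.Xreg := by
  by_cases hr1 : r = X.i
  · exact Or.inl hr1
  right
  have hxEF : x ∈ X.EF := Finset.mem_union_left _ hx
  have hrk : r ≠ X.k := by
    rintro rfl
    by_cases hj : j ∈ Finset.univ.image X.b
    · simp only [Finset.mem_image, Finset.mem_univ, true_and] at hj
      obtain ⟨t, rfl⟩ := hj
      rw [X.hcb t] at h
      exact X.cset_EF_disj hxEF t h
    · have : x ∈ X.Fset := by
        unfold Fset
        rw [← h]
        exact Finset.mem_image_of_mem _ (by simp [hj])
      exact X.E_F_disj hx this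
  have hrR : r ∈ X.Rset := X.mem_Rset.mpr ⟨hr1, hrk⟩
  have hj : j ∈ X.NonS := by
    rw [X.mem_NonS]
    intro hjS
    have : ((r, j) : Fin 6 × Fin 7) ∈ X.SReg := by
      unfold SReg; rw [Finset.mem_product]; exact ⟨hrR, hjS⟩
    have := X.SReg_colors this
    rw [h] at this
    exact X.EF_not_D hxEF this
  rw [X.mem_Xreg]
  exact ⟨hrR, hj⟩

lemma Eset_has_Xcell {x : C} (hx : x ∈ X.Eset) : ∃ p ∈ X.Xreg, X.M p.1 p.2 = x := by
  by_contra hcon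
  push_neg at hcon
  have hxE := hx
  unfold Eset at hx
  rw [Finset.mem_image] at hx
  obtain ⟨j₀, -, hj₀⟩ := hx
  have hxEF : x ∈ X.EF := Finset.mem_union_left _ hxE
  have hxT : x ∈ X.Tset := X.EF_sub_T hxEF
  have hcells : ∀ r j, X.M r j = x → r = X.i ∧ j = j₀ := by
    intro r j h
    rcases X.Ecell hxE h with h1 | h1
    · subst h1
      exact ⟨rfl, X.hrow X.i (h.trans hj₀.symm)⟩
    · exact absurd h (hcon _ h1)
  obtain ⟨d, hd, hdCov⟩ : ∃ d ∈ X.D, d ∉ X.Rset.image (fun r => X.M r j₀) := by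
    by_contra hcon2
    push_neg at hcon2
    have hsub : X.D ⊆ X.Rset.image (fun r => X.M r j₀) := hcon2
    have h1 := Finset.card_le_card hsub
    have h2 : (X.Rset.image (fun r => X.M r j₀)).card ≤ 4 := by
      calc _ ≤ X.Rset.card := Finset.card_image_le
      _ = 4 := X.card_Rset
    rw [X.card_D] at h1
    omega
  have hne : x ≠ d := fun h => X.D_not_T hd (h ▸ hxT)
  rcases X.hlink x d hne with ⟨r, j₁, j₂, h₁, h₂⟩ | ⟨r₁, r₂, j, h₁, h₂⟩
  · obtain ⟨rfl, -⟩ := hcells r j₁ h₁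
    exact X.D_not_T hd (by rw [← h₂]; exact X.row_i_mem_T j₂)
  · obtain ⟨-, rfl⟩ := hcells r₁ j h₁
    have : r₂ ∈ X.Rset := X.D_rows hd h₂
    exact hdCov (Finset.mem_image.mpr ⟨r₂, this, h₂⟩)

lemma EF_has_Xcell {x : C} (hx : x ∈ X.EF) : ∃ p ∈ X.Xreg, X.M p.1 p.2 = x := by
  rcases Finset.mem_union.mp hx with he | hf
  · exact X.Eset_has_Xcell he
  · have := X.flip.Eset_has_Xcell (x := x) (by rw [flip_Eset]; exact hf)
    simpa only [flip_Xreg, flip_M] using this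

lemma card_NonS : X.NonS.card = 7 - X.Scols.card := by
  unfold NonS
  rw [Finset.card_sdiff_of_subset (Finset.subset_univ _)]
  simp

lemma card_Xreg : X.Xreg.card = 4 * X.NonS.card := by
  unfold Xreg
  rw [Finset.card_product, X.card_Rset]

lemma card_Scols_le : X.Scols.card ≤ 5 := by
  have h1 : X.EF ⊆ X.Xreg.image (fun p => X.M p.1 p.2) := by
    intro x hx
    obtain ⟨p, hp, hpx⟩ := X.EF_has_Xcell hx
    exact Finset.mem_image.mpr ⟨p, hp, hpx⟩
  have h2 := Finset.card_le_card h1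
  have h3 : (X.Xreg.image (fun p => X.M p.1 p.2)).card ≤ X.Xreg.card := Finset.card_image_le
  rw [X.card_EF] at h2
  have h4 := X.card_Xreg
  have h5 := X.card_NonS
  have h6 := X.card_Scols_ge
  omega


lemma scols5 (h5 : X.Scols.card = 5) : False := by
  have hNS : X.NonS.card = 2 := by rw [X.card_NonS, h5]
  have hXc : X.Xreg.card = 8 := by rw [X.card_Xreg, hNS]
  -- the colour map on Xreg is injective with image EF
  have h1 : X.EF ⊆ X.Xreg.image (fun p => X.M p.1 p.2) := by
    intro x hx
    obtain ⟨p, hp, hpx⟩ := X.EF_has_Xcell hx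
    exact Finset.mem_image.mpr ⟨p, hp, hpx⟩
  have himle : (X.Xreg.image (fun p => X.M p.1 p.2)).card ≤ X.Xreg.card := Finset.card_image_le
  have him : X.Xreg.image (fun p => X.M p.1 p.2) = X.EF := by
    refine (Finset.eq_of_subset_of_card_le h1 ?_).symm
    rw [X.card_EF]; omega
  have hinj : Set.InjOn (fun p : Fin 6 × Fin 7 => X.M p.1 p.2) X.Xreg := by
    apply Finset.injOn_of_card_image_eq
    rw [him, X.card_EF, hXc]
  have hXEF : ∀ q ∈ X.Xreg, X.M q.1 q.2 ∈ X.EF := by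
    intro q hq
    rw [← him]
    exact Finset.mem_image_of_mem _ hq
  -- pick a column outside S
  have : 0 < X.NonS.card := by omega
  obtain ⟨u, hu⟩ := Finset.card_pos.mp this
  have huS : ¬ u ∈ X.Scols := X.mem_NonS.mp hu
  have hxE : X.M X.i u ∈ X.Eset := by
    unfold Eset
    refine Finset.mem_image_of_mem _ ?_
    simp only [Finset.mem_sdiff, Finset.mem_univ, true_and]
    intro hmem
    exact huS (Finset.mem_union_left _ hmem)
  set x := X.M X.i u with hxdef
  have hxEF : x ∈ X.EF := Finset.mem_union_left _ hxE
  obtain ⟨p, hp, hpx⟩ := X.EF_has_Xcell hxEF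
  -- every colour of D appears in row p.1 within an S-column
  have key : ∀ d ∈ X.D, ∃ j ∈ X.Scols, X.M p.1 j = d := by
    intro d hd
    have hne : x ≠ d := fun h => X.D_not_T hd (h ▸ X.EF_sub_T hxEF)
    rcases X.hlink x d hne with ⟨r, j₁, j₂, h₁, h₂⟩ | ⟨r₁, r₂, j, h₁, h₂⟩
    · rcases X.Ecell hxE h₁ with rfl | hX
      · exact absurd (by rw [← h₂]; exact X.row_i_mem_T j₂) (X.D_not_T hd)
      · have hpe : ((r, j₁) : Fin 6 × Fin 7) = p := hinj hX hp (by simpa using h₁.trans hpx.symm)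
        have hr : r = p.1 := by rw [← hpe]
        by_cases hj₂ : j₂ ∈ X.Scols
        · exact ⟨j₂, hj₂, by rw [← hr]; exact h₂⟩
        · exfalso
          have hmem : ((r, j₂) : Fin 6 × Fin 7) ∈ X.Xreg := by
            rw [X.mem_Xreg]
            exact ⟨(X.mem_Xreg.mp hX).1, X.mem_NonS.mpr hj₂⟩
          have hd2 : X.M r j₂ ∈ X.EF := hXEF _ hmem
          rw [h₂] at hd2
          exact X.EF_not_D hd2 hd
    · exfalso
      have hr₂ : r₂ ∈ X.Rset := X.D_rows hd h₂
      have hjNS : j ∈ X.NonS := by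
        rcases X.Ecell hxE h₁ with rfl | hX
        · have : j = u := X.hrow X.i h₁
          rw [this]; exact hu
        · have hpe : ((r₁, j) : Fin 6 × Fin 7) = p := hinj hX hp (by simpa using h₁.trans hpx.symm)
          have : j = p.2 := by rw [← hpe]
          rw [this]
          exact (X.mem_Xreg.mp hp).2
      have hmem : ((r₂, j) : Fin 6 × Fin 7) ∈ X.Xreg := X.mem_Xreg.mpr ⟨hr₂, hjNS⟩
      have hd2 : X.M r₂ j ∈ X.EF := hXEF _ hmem
      rw [h₂] at hd2
      exact X.EF_not_D hd2 hd
  have hsub : X.D ⊆ X.Scols.image (fun j => X.M p.1 j) := by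
    intro d hd
    obtain ⟨j, hj, hjd⟩ := key d hd
    exact Finset.mem_image.mpr ⟨j, hj, hjd⟩
  have h8 := Finset.card_le_card hsub
  have h9 : (X.Scols.image (fun j => X.M p.1 j)).card ≤ 5 := by
    calc _ ≤ X.Scols.card := Finset.card_image_le
    _ = 5 := h5
  rw [X.card_D] at h8
  omega


def dXs : Finset (Fin 6 × Fin 7) := X.Xreg.filter (fun p => X.M p.1 p.2 ∈ X.D)

def efXs : Finset (Fin 6 × Fin 7) := X.Xreg.filter (fun p => X.M p.1 p.2 ∈ X.EF)

@[simp] lemma flip_dXs : X.flip.dXs = X.dXs := by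
  unfold dXs; rw [flip_Xreg, flip_D]; rfl

@[simp] lemma flip_efXs : X.flip.efXs = X.efXs := by
  unfold efXs; rw [flip_Xreg, flip_EF]; rfl

lemma Mi_NonS_mem_Eset {u : Fin 7} (hu : u ∈ X.NonS) : X.M X.i u ∈ X.Eset := by
  have huS : ¬ u ∈ X.Scols := X.mem_NonS.mp hu
  unfold Eset
  refine Finset.mem_image_of_mem _ ?_
  simp only [Finset.mem_sdiff, Finset.mem_univ, true_and]
  intro hmem
  exact huS (Finset.mem_union_left _ hmem)

lemma fib_exact (h4 : X.Scols.card = 4) {d : C} (hd : d ∈ X.D) :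
    (X.SReg.filter (fun p => X.M p.1 p.2 = d)).card = 2 := by
  by_contra hne
  have h3 : 3 ≤ (X.SReg.filter (fun p => X.M p.1 p.2 = d)).card := by
    have := X.fib_two_le hd
    omega
  have hsum := X.sum_fib
  rw [X.card_SReg, h4] at hsum
  have hsplit : (X.SReg.filter (fun p => X.M p.1 p.2 = d)).card
      + ∑ e ∈ X.D.erase d, (X.SReg.filter (fun p => X.M p.1 p.2 = e)).card
      = ∑ e ∈ X.D, (X.SReg.filter (fun p => X.M p.1 p.2 = e)).card :=
    Finset.add_sum_erase X.D (fun e => (X.SReg.filter (fun p => X.M p.1 p.2 = e)).card) hd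
  have hrest : 14 ≤ ∑ e ∈ X.D.erase d, (X.SReg.filter (fun p => X.M p.1 p.2 = e)).card := by
    have hcarde : (X.D.erase d).card = 7 := by
      rw [Finset.card_erase_of_mem hd, X.card_D]
    have := Finset.card_nsmul_le_sum (X.D.erase d)
      (fun e => (X.SReg.filter (fun p => X.M p.1 p.2 = e)).card) 2
      (fun e he => X.fib_two_le (Finset.mem_of_mem_erase he))
    rw [hcarde] at this
    simpa using this
  omega

lemma outsider_core {u : Fin 7} (hu : u ∈ X.NonS) {p : Fin 6 × Fin 7} (hp : p ∈ X.Xreg)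
    (huniq : ∀ q ∈ X.Xreg, X.M q.1 q.2 = X.M X.i u → q = p)
    {d : C} (hd : d ∈ X.D) (hdrow : d ∉ X.Scols.image (fun j => X.M p.1 j)) :
    ∃ q ∈ X.dXs, X.M q.1 q.2 = d ∧ (q.1 = p.1 ∨ q.2 = u ∨ q.2 = p.2) := by
  have hxE : X.M X.i u ∈ X.Eset := X.Mi_NonS_mem_Eset hu
  have hxEF : X.M X.i u ∈ X.EF := Finset.mem_union_left _ hxE
  have hne : X.M X.i u ≠ d := fun h => X.D_not_T hd (h ▸ X.EF_sub_T hxEF)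
  have hdXmem : ∀ q : Fin 6 × Fin 7, q ∈ X.Xreg → X.M q.1 q.2 = d → q ∈ X.dXs := by
    intro q hq hqd
    unfold dXs
    rw [Finset.mem_filter]
    exact ⟨hq, by rw [hqd]; exact hd⟩
  rcases X.hlink (X.M X.i u) d hne with ⟨r, j₁, j₂, h₁, h₂⟩ | ⟨r₁, r₂, j, h₁, h₂⟩
  · rcases X.Ecell hxE h₁ with rfl | hX
    · exact absurd (by rw [← h₂]; exact X.row_i_mem_T j₂) (X.D_not_T hd)
    · have hpe : ((r, j₁) : Fin 6 × Fin 7) = p := huniq _ hX h₁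
      have hr : r = p.1 := by rw [← hpe]
      by_cases hj₂ : j₂ ∈ X.Scols
      · exact absurd (Finset.mem_image.mpr ⟨j₂, hj₂, by rw [← hr]; exact h₂⟩) hdrow
      · have hmem : ((r, j₂) : Fin 6 × Fin 7) ∈ X.Xreg := by
          rw [X.mem_Xreg]
          exact ⟨(X.mem_Xreg.mp hX).1, X.mem_NonS.mpr hj₂⟩
        exact ⟨(r, j₂), hdXmem _ hmem h₂, h₂, Or.inl hr⟩
  · have hr₂ : r₂ ∈ X.Rset := X.D_rows hd h₂
    rcases X.Ecell hxE h₁ with rfl | hX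
    · have hju : j = u := X.hrow X.i h₁
      subst hju
      have hmem : ((r₂, j) : Fin 6 × Fin 7) ∈ X.Xreg := X.mem_Xreg.mpr ⟨hr₂, hu⟩
      exact ⟨(r₂, j), hdXmem _ hmem h₂, h₂, Or.inr (Or.inl rfl)⟩
    · have hpe : ((r₁, j) : Fin 6 × Fin 7) = p := huniq _ hX h₁
      have hj : j = p.2 := by rw [← hpe]
      have hmem : ((r₂, j) : Fin 6 × Fin 7) ∈ X.Xreg := by
        rw [X.mem_Xreg]
        refine ⟨hr₂, ?_⟩
        rw [hj]
        exact (X.mem_Xreg.mp hp).2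
      exact ⟨(r₂, j), hdXmem _ hmem h₂, h₂, Or.inr (Or.inr hj)⟩


lemma dX_efX_card : X.dXs.card + X.efXs.card = X.Xreg.card := by
  have h := Finset.card_filter_add_card_filter_not
    (s := X.Xreg) (p := fun p => X.M p.1 p.2 ∈ X.D)
  have he : X.Xreg.filter (fun p => ¬ X.M p.1 p.2 ∈ X.D) = X.efXs := by
    unfold efXs
    apply Finset.filter_congr
    intro q hq
    exact ⟨fun hnd => (X.Xreg_colors hq).resolve_left hnd, fun hEF hD => X.EF_not_D hEF hD⟩
  rw [he] at h
  exact h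

lemma nx_pos {x : C} (hx : x ∈ X.EF) :
    1 ≤ (X.efXs.filter (fun p => X.M p.1 p.2 = x)).card := by
  obtain ⟨p, hp, hpx⟩ := X.EF_has_Xcell hx
  refine Finset.card_pos.mpr ⟨p, ?_⟩
  rw [Finset.mem_filter]
  refine ⟨?_, hpx⟩
  unfold efXs
  rw [Finset.mem_filter]
  exact ⟨hp, by rw [hpx]; exact hx⟩

lemma sum_nx : ∑ x ∈ X.EF, (X.efXs.filter (fun p => X.M p.1 p.2 = x)).card = X.efXs.card := by
  symm
  apply Finset.card_eq_sum_card_fiberwise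
  intro p hp
  unfold efXs at hp
  exact (Finset.mem_filter.mp hp).2

lemma single_extract {x : C} (hx : x ∈ X.EF)
    (h1 : (X.efXs.filter (fun p => X.M p.1 p.2 = x)).card = 1) :
    ∃ p ∈ X.Xreg, X.M p.1 p.2 = x ∧ ∀ q ∈ X.Xreg, X.M q.1 q.2 = x → q = p := by
  obtain ⟨p, hp⟩ := Finset.card_eq_one.mp h1
  have hpmem : p ∈ X.efXs.filter (fun p => X.M p.1 p.2 = x) := by rw [hp]; simp
  rw [Finset.mem_filter] at hpmem
  obtain ⟨hpef, hpx⟩ := hpmem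
  have hpX : p ∈ X.Xreg := Finset.mem_of_mem_filter _ hpef
  refine ⟨p, hpX, hpx, ?_⟩
  intro q hq hqx
  have : q ∈ X.efXs.filter (fun p => X.M p.1 p.2 = x) := by
    rw [Finset.mem_filter]
    refine ⟨?_, hqx⟩
    unfold efXs
    rw [Finset.mem_filter]
    exact ⟨hq, by rw [hqx]; exact hx⟩
  rw [hp] at this
  exact Finset.mem_singleton.mp this

lemma outsider_ge2 (h4 : X.Scols.card = 4) (hdX : X.dXs.card ≤ 3) {u : Fin 7}
    (hu : u ∈ X.NonS) :
    2 ≤ (X.efXs.filter (fun p => X.M p.1 p.2 = X.M X.i u)).card := by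
  have hxEF : X.M X.i u ∈ X.EF := Finset.mem_union_left _ (X.Mi_NonS_mem_Eset hu)
  have h1 := X.nx_pos hxEF
  by_contra hcon
  have h2 : (X.efXs.filter (fun p => X.M p.1 p.2 = X.M X.i u)).card = 1 := by omega
  obtain ⟨p, hpX, hpx, huniq⟩ := X.single_extract hxEF h2
  set Cov := X.Scols.image (fun j => X.M p.1 j) ∪ X.dXs.image (fun q => X.M q.1 q.2) with hCov
  have hCovcard : Cov.card ≤ 7 := by
    have ha : (X.Scols.image (fun j => X.M p.1 j)).card ≤ 4 := by
      calc _ ≤ X.Scols.card := Finset.card_image_le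
      _ = 4 := h4
    have hb : (X.dXs.image (fun q => X.M q.1 q.2)).card ≤ 3 := by
      calc _ ≤ X.dXs.card := Finset.card_image_le
      _ ≤ 3 := hdX
    calc Cov.card ≤ _ + _ := Finset.card_union_le _ _
    _ ≤ 7 := by omega
  obtain ⟨d, hd, hdCov⟩ : ∃ d ∈ X.D, d ∉ Cov := by
    by_contra hcon2
    push_neg at hcon2
    have := Finset.card_le_card hcon2
    rw [X.card_D] at this
    omega
  have hdrow : d ∉ X.Scols.image (fun j => X.M p.1 j) := by
    intro hmem
    exact hdCov (Finset.mem_union_left _ hmem)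
  obtain ⟨q, hqdX, hqd, -⟩ := X.outsider_core hu hpX huniq hd hdrow
  exact hdCov (Finset.mem_union_right _ (Finset.mem_image.mpr ⟨q, hqdX, hqd⟩))

lemma outsider_forced (h4 : X.Scols.card = 4) (hdX : X.dXs.card = 4) {u : Fin 7}
    (hu : u ∈ X.NonS) {p : Fin 6 × Fin 7} (hp : p ∈ X.Xreg)
    (huniq : ∀ q ∈ X.Xreg, X.M q.1 q.2 = X.M X.i u → q = p) :
    X.Scols.image (fun j => X.M p.1 j) = X.D \ X.dXs.image (fun q => X.M q.1 q.2)
    ∧ ∀ q ∈ X.dXs, q.1 = p.1 ∨ q.2 = u ∨ q.2 = p.2 := by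
  set base := X.Scols.image (fun j => X.M p.1 j) with hbase
  have hbsub : base ⊆ X.D := by
    intro y hy
    rw [hbase, Finset.mem_image] at hy
    obtain ⟨j, hj, rfl⟩ := hy
    refine X.SReg_colors (p := (p.1, j)) ?_
    unfold SReg
    rw [Finset.mem_product]
    exact ⟨(X.mem_Xreg.mp hp).1, hj⟩
  have hbcard : base.card = 4 := by
    rw [hbase, Finset.card_image_of_injective _ (X.hrow p.1), h4]
  set K := X.D \ base with hK
  have hKcard : K.card = 4 := by
    rw [hK, Finset.card_sdiff_of_subset hbsub, X.card_D, hbcard]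
  set vis := X.dXs.filter (fun q => q.1 = p.1 ∨ q.2 = u ∨ q.2 = p.2) with hvis
  have hKvis : K ⊆ vis.image (fun q => X.M q.1 q.2) := by
    intro d hdK
    rw [hK, Finset.mem_sdiff] at hdK
    obtain ⟨hdD, hdb⟩ := hdK
    obtain ⟨q, hqdX, hqd, hqpos⟩ := X.outsider_core hu hp huniq hdD hdb
    refine Finset.mem_image.mpr ⟨q, ?_, hqd⟩
    rw [hvis, Finset.mem_filter]
    exact ⟨hqdX, hqpos⟩
  have hv1 : vis.card ≤ 4 := by
    calc vis.card ≤ X.dXs.card := Finset.card_le_card (Finset.filter_subset _ _)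
    _ = 4 := hdX
  have hv2 : 4 ≤ vis.card := by
    calc 4 = K.card := hKcard.symm
    _ ≤ (vis.image (fun q => X.M q.1 q.2)).card := Finset.card_le_card hKvis
    _ ≤ vis.card := Finset.card_image_le
  have hviseq : vis = X.dXs := by
    apply Finset.eq_of_subset_of_card_le (Finset.filter_subset _ _)
    rw [hdX]
    exact hv2
  have hKeq : K = X.dXs.image (fun q => X.M q.1 q.2) := by
    rw [← hviseq]
    apply Finset.eq_of_subset_of_card_le hKvis
    calc (vis.image (fun q => X.M q.1 q.2)).card ≤ vis.card := Finset.card_image_le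
    _ ≤ 4 := hv1
    _ = K.card := hKcard.symm
  constructor
  · rw [← hKeq, hK, sdiff_sdiff_right_self, inf_eq_inter, Finset.inter_eq_right.mpr hbsub]
  · intro q hq
    rw [← hviseq, hvis, Finset.mem_filter] at hq
    exact hq.2


lemma scols4 (h4 : X.Scols.card = 4) : False := by
  have hNS3 : X.NonS.card = 3 := by rw [X.card_NonS, h4]
  have hXc : X.Xreg.card = 12 := by rw [X.card_Xreg, hNS3]
  have hsplit := X.dX_efX_card
  rw [hXc] at hsplit
  by_cases hdX : X.dXs.card ≤ 3
  · -- Case A : few d-extras, every outsider needs two X-cells, count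
    set O : Finset C := X.NonS.image (X.M X.i) ∪ X.NonS.image (X.M X.k) with hO
    have hOE : X.NonS.image (X.M X.i) ⊆ X.Eset := by
      intro x hx
      obtain ⟨u, hu, rfl⟩ := Finset.mem_image.mp hx
      exact X.Mi_NonS_mem_Eset hu
    have hOF : X.NonS.image (X.M X.k) ⊆ X.Fset := by
      intro x hx
      obtain ⟨u, hu, rfl⟩ := Finset.mem_image.mp hx
      have := X.flip.Mi_NonS_mem_Eset (u := u) (by rw [X.flip_NonS]; exact hu)
      rw [X.flip_Eset] at this
      exact this
    have hOsub : O ⊆ X.EF := Finset.union_subset_union hOE hOF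
    have hOcard : O.card = 6 := by
      have h1 : (X.NonS.image (X.M X.i)).card = 3 := by
        rw [Finset.card_image_of_injective _ (X.hrow X.i), hNS3]
      have h2 : (X.NonS.image (X.M X.k)).card = 3 := by
        rw [Finset.card_image_of_injective _ (X.hrow X.k), hNS3]
      have h3 : (X.NonS.image (X.M X.i) ∩ X.NonS.image (X.M X.k)) = ∅ := by
        rw [Finset.eq_empty_iff_forall_notMem]
        intro x hx
        rw [Finset.mem_inter] at hx
        exact X.E_F_disj (hOE hx.1) (hOF hx.2)
      have h5 := Finset.card_union_add_card_inter (X.NonS.image (X.M X.i))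
        (X.NonS.image (X.M X.k))
      rw [h3] at h5
      simp only [Finset.card_empty, Nat.add_zero] at h5
      rw [hO]
      omega
    have hge : ∀ x ∈ O, 2 ≤ (X.efXs.filter (fun p => X.M p.1 p.2 = x)).card := by
      intro x hx
      rw [hO, Finset.mem_union] at hx
      rcases hx with hx | hx
      · obtain ⟨u, hu, rfl⟩ := Finset.mem_image.mp hx
        exact X.outsider_ge2 h4 hdX hu
      · obtain ⟨u, hu, rfl⟩ := Finset.mem_image.mp hx
        have hres := X.flip.outsider_ge2 (by rw [X.flip_Scols]; exact h4)
          (by rw [X.flip_dXs]; exact hdX) (u := u) (by rw [X.flip_NonS]; exact hu)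
        simp only [X.flip_efXs, X.flip_M, X.flip_i] at hres
        exact hres
    have hA : 12 ≤ ∑ x ∈ O, (X.efXs.filter (fun p => X.M p.1 p.2 = x)).card := by
      have hh := Finset.card_nsmul_le_sum O
        (fun x => (X.efXs.filter (fun p => X.M p.1 p.2 = x)).card) 2 hge
      rw [hOcard] at hh
      simpa using hh
    have hB : 2 ≤ ∑ x ∈ X.EF \ O, (X.efXs.filter (fun p => X.M p.1 p.2 = x)).card := by
      have hcardsd : (X.EF \ O).card = 2 := by
        rw [Finset.card_sdiff_of_subset hOsub, X.card_EF, hOcard]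
      have hh := Finset.card_nsmul_le_sum (X.EF \ O)
        (fun x => (X.efXs.filter (fun p => X.M p.1 p.2 = x)).card) 1
        (fun x hx => X.nx_pos (Finset.mem_sdiff.mp hx).1)
      rw [hcardsd] at hh
      simpa using hh
    have htot : ∑ x ∈ X.EF \ O, (X.efXs.filter (fun p => X.M p.1 p.2 = x)).card
        + ∑ x ∈ O, (X.efXs.filter (fun p => X.M p.1 p.2 = x)).card
        = ∑ x ∈ X.EF, (X.efXs.filter (fun p => X.M p.1 p.2 = x)).card :=
      Finset.sum_sdiff hOsub
    have hsum := X.sum_nx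
    omega
  · -- Case B : exactly four d-extras, all ef-colours single
    push_neg at hdX
    have h8 : 8 ≤ X.efXs.card := by
      have hh := Finset.card_nsmul_le_sum X.EF
        (fun x => (X.efXs.filter (fun p => X.M p.1 p.2 = x)).card) 1
        (fun x hx => X.nx_pos hx)
      rw [X.card_EF] at hh
      have hsum := X.sum_nx
      simp only [smul_eq_mul, mul_one] at hh
      omega
    have hdXeq : X.dXs.card = 4 := by omega
    have hefXeq : X.efXs.card = 8 := by omega
    have hnx1 : ∀ x ∈ X.EF, (X.efXs.filter (fun p => X.M p.1 p.2 = x)).card = 1 := by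
      intro x hx
      by_contra hne
      have h2 : 2 ≤ (X.efXs.filter (fun p => X.M p.1 p.2 = x)).card := by
        have := X.nx_pos hx
        omega
      have hsplit2 : (X.efXs.filter (fun p => X.M p.1 p.2 = x)).card
          + ∑ y ∈ X.EF.erase x, (X.efXs.filter (fun p => X.M p.1 p.2 = y)).card
          = ∑ y ∈ X.EF, (X.efXs.filter (fun p => X.M p.1 p.2 = y)).card :=
        Finset.add_sum_erase X.EF (fun y => (X.efXs.filter (fun p => X.M p.1 p.2 = y)).card) hx
      have hrest : 7 ≤ ∑ y ∈ X.EF.erase x, (X.efXs.filter (fun p => X.M p.1 p.2 = y)).card := by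
        have hcarde : (X.EF.erase x).card = 7 := by
          rw [Finset.card_erase_of_mem hx, X.card_EF]
        have hh := Finset.card_nsmul_le_sum (X.EF.erase x)
          (fun y => (X.efXs.filter (fun p => X.M p.1 p.2 = y)).card) 1
          (fun y hy => X.nx_pos (Finset.mem_of_mem_erase hy))
        rw [hcarde] at hh
        simpa using hh
      have hsum := X.sum_nx
      omega
    obtain ⟨u, w, z, huw, huz, hwz, hNSeq⟩ := Finset.card_eq_three.mp hNS3
    have hu : u ∈ X.NonS := by rw [hNSeq]; simp
    have hw : w ∈ X.NonS := by rw [hNSeq]; simp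
    have hz : z ∈ X.NonS := by rw [hNSeq]; simp
    have getE : ∀ v, v ∈ X.NonS → ∃ p, p ∈ X.Xreg ∧ X.M p.1 p.2 = X.M X.i v ∧
        (∀ q ∈ X.Xreg, X.M q.1 q.2 = X.M X.i v → q = p) := by
      intro v hv
      have hxEF : X.M X.i v ∈ X.EF := Finset.mem_union_left _ (X.Mi_NonS_mem_Eset hv)
      obtain ⟨p, hp, h1, h2⟩ := X.single_extract hxEF (hnx1 _ hxEF)
      exact ⟨p, hp, h1, h2⟩
    have getF : ∀ v, v ∈ X.NonS → ∃ p, p ∈ X.Xreg ∧ X.M p.1 p.2 = X.M X.k v ∧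
        (∀ q ∈ X.Xreg, X.M q.1 q.2 = X.M X.k v → q = p) := by
      intro v hv
      have hxF : X.M X.k v ∈ X.Fset := by
        have := X.flip.Mi_NonS_mem_Eset (u := v) (by rw [X.flip_NonS]; exact hv)
        rw [X.flip_Eset] at this
        exact this
      have hxEF : X.M X.k v ∈ X.EF := Finset.mem_union_right _ hxF
      obtain ⟨p, hp, h1, h2⟩ := X.single_extract hxEF (hnx1 _ hxEF)
      exact ⟨p, hp, h1, h2⟩
    obtain ⟨pu, hpu, hpux, hpuU⟩ := getE u hu
    obtain ⟨pw, hpw, hpwx, hpwU⟩ := getE w hw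
    obtain ⟨pz, hpz, hpzx, hpzU⟩ := getE z hz
    obtain ⟨qu, hqu, hqux, hquU⟩ := getF u hu
    obtain ⟨qw, hqw, hqwx, hqwU⟩ := getF w hw
    obtain ⟨qz, hqz, hqzx, hqzU⟩ := getF z hz
    have Fu := X.outsider_forced h4 hdXeq hu hpu hpuU
    have Fw := X.outsider_forced h4 hdXeq hw hpw hpwU
    have Fz := X.outsider_forced h4 hdXeq hz hpz hpzU
    -- flip versions for the f-outsiders
    have hflip4 : X.flip.Scols.card = 4 := by rw [X.flip_Scols]; exact h4
    have hflipdX : X.flip.dXs.card = 4 := by rw [X.flip_dXs]; exact hdXeq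
    have Gu := X.flip.outsider_forced hflip4 hflipdX (u := u)
      (by rw [X.flip_NonS]; exact hu) (p := qu) (by rw [X.flip_Xreg]; exact hqu)
      (by intro q hq hqq
          rw [X.flip_Xreg] at hq
          exact hquU q hq hqq)
    have Gw := X.flip.outsider_forced hflip4 hflipdX (u := w)
      (by rw [X.flip_NonS]; exact hw) (p := qw) (by rw [X.flip_Xreg]; exact hqw)
      (by intro q hq hqq
          rw [X.flip_Xreg] at hq
          exact hqwU q hq hqq)
    have Gz := X.flip.outsider_forced hflip4 hflipdX (u := z)
      (by rw [X.flip_NonS]; exact hz) (p := qz) (by rw [X.flip_Xreg]; exact hqz)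
      (by intro q hq hqq
          rw [X.flip_Xreg] at hq
          exact hqzU q hq hqq)
    simp only [X.flip_Scols, X.flip_D, X.flip_dXs, X.flip_M] at Gu Gw Gz
    -- the common colour set of the d-extras
    set Kimg := X.dXs.image (fun q => X.M q.1 q.2) with hKimg
    set RS : Finset (Fin 6) := {pu.1, pw.1, pz.1, qu.1, qw.1, qz.1} with hRS
    have hRSbase : ∀ ρ ∈ RS, X.Scols.image (fun j => X.M ρ j) = X.D \ Kimg := by
      intro ρ hρ
      rw [hRS] at hρ
      simp only [Finset.mem_insert, Finset.mem_singleton] at hρ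
      rcases hρ with rfl | rfl | rfl | rfl | rfl | rfl
      · exact Fu.1
      · exact Fw.1
      · exact Fz.1
      · exact Gu.1
      · exact Gw.1
      · exact Gz.1
    have hKimgD : Kimg ⊆ X.D := by
      intro y hy
      rw [hKimg, Finset.mem_image] at hy
      obtain ⟨q, hq, rfl⟩ := hy
      unfold dXs at hq
      exact (Finset.mem_filter.mp hq).2
    have hBcard : 4 ≤ (X.D \ Kimg).card := by
      have h1 : Kimg.card ≤ 4 := by
        calc Kimg.card ≤ X.dXs.card := Finset.card_image_le
        _ = 4 := hdXeq
      rw [Finset.card_sdiff_of_subset hKimgD, X.card_D]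
      omega
    have hRS2 : RS.card ≤ 2 := by
      by_contra hcon
      push_neg at hcon
      have hgtRS : 2 < RS.card := by omega
      obtain ⟨r1, r2, r3, hr1, hr2, hr3, h12, h13, h23⟩ :=
        Finset.two_lt_card_iff.mp hgtRS
      obtain ⟨d, hd⟩ : (X.D \ Kimg).Nonempty := Finset.card_pos.mp (by omega)
      have hdD : d ∈ X.D := (Finset.mem_sdiff.mp hd).1
      have hcell3 : ∀ r, r ∈ RS → ∃ j, j ∈ X.Scols ∧ X.M r j = d := by
        intro r hr
        have := hRSbase r hr
        have hdim : d ∈ X.Scols.image (fun j => X.M r j) := by rw [this]; exact hd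
        obtain ⟨j, hj, hjd⟩ := Finset.mem_image.mp hdim
        exact ⟨j, hj, hjd⟩
      obtain ⟨j1, hj1, hj1d⟩ := hcell3 r1 hr1
      obtain ⟨j2, hj2, hj2d⟩ := hcell3 r2 hr2
      obtain ⟨j3, hj3, hj3d⟩ := hcell3 r3 hr3
      have hRsub : RS ⊆ X.Rset := by
        intro r hr
        rw [hRS] at hr
        simp only [Finset.mem_insert, Finset.mem_singleton] at hr
        rcases hr with rfl | rfl | rfl | rfl | rfl | rfl
        · exact (X.mem_Xreg.mp hpu).1
        · exact (X.mem_Xreg.mp hpw).1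
        · exact (X.mem_Xreg.mp hpz).1
        · exact (X.mem_Xreg.mp hqu).1
        · exact (X.mem_Xreg.mp hqw).1
        · exact (X.mem_Xreg.mp hqz).1
      have hmem : ∀ (r : Fin 6) (j : Fin 7), r ∈ RS → j ∈ X.Scols → X.M r j = d →
          ((r, j) : Fin 6 × Fin 7) ∈ X.SReg.filter (fun p => X.M p.1 p.2 = d) := by
        intro r j hr hj hjd
        rw [Finset.mem_filter]
        refine ⟨?_, hjd⟩
        unfold SReg
        rw [Finset.mem_product]
        exact ⟨hRsub hr, hj⟩
      have hgt : 2 < (X.SReg.filter (fun p => X.M p.1 p.2 = d)).card := by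
        rw [Finset.two_lt_card_iff]
        exact ⟨(r1, j1), (r2, j2), (r3, j3), hmem r1 j1 hr1 hj1 hj1d,
          hmem r2 j2 hr2 hj2 hj2d, hmem r3 j3 hr3 hj3 hj3d,
          fun hh => h12 (congrArg Prod.fst hh), fun hh => h13 (congrArg Prod.fst hh),
          fun hh => h23 (congrArg Prod.fst hh)⟩
      have := X.fib_exact h4 hdD
      omega
    -- the six single cells are pairwise distinct
    have cellne : ∀ {p q : Fin 6 × Fin 7} {x y : C}, X.M p.1 p.2 = x → X.M q.1 q.2 = y →
        x ≠ y → p ≠ q := by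
      intro p q x y hx hy hxy heq
      rw [heq] at hx
      exact hxy (hx.symm.trans hy)
    have hEFne : ∀ v v' : Fin 7, v ∈ X.NonS → v' ∈ X.NonS → X.M X.i v ≠ X.M X.k v' := by
      intro v v' hv hv' heq
      refine X.E_F_disj (X.Mi_NonS_mem_Eset hv) ?_
      rw [heq]
      have := X.flip.Mi_NonS_mem_Eset (u := v') (by rw [X.flip_NonS]; exact hv')
      rw [X.flip_Eset] at this
      exact this
    have hEne : ∀ v v' : Fin 7, v ≠ v' → X.M X.i v ≠ X.M X.i v' :=
      fun v v' hne heq => hne (X.hrow X.i heq)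
    have hFne : ∀ v v' : Fin 7, v ≠ v' → X.M X.k v ≠ X.M X.k v' :=
      fun v v' hne heq => hne (X.hrow X.k heq)
    have n12 : pu ≠ pw := cellne hpux hpwx (hEne u w huw)
    have n13 : pu ≠ pz := cellne hpux hpzx (hEne u z huz)
    have n23 : pw ≠ pz := cellne hpwx hpzx (hEne w z hwz)
    have n45 : qu ≠ qw := cellne hqux hqwx (hFne u w huw)
    have n46 : qu ≠ qz := cellne hqux hqzx (hFne u z huz)
    have n56 : qw ≠ qz := cellne hqwx hqzx (hFne w z hwz)
    have n14 : pu ≠ qu := cellne hpux hqux (hEFne u u hu hu)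
    have n15 : pu ≠ qw := cellne hpux hqwx (hEFne u w hu hw)
    have n16 : pu ≠ qz := cellne hpux hqzx (hEFne u z hu hz)
    have n24 : pw ≠ qu := cellne hpwx hqux (hEFne w u hw hu)
    have n25 : pw ≠ qw := cellne hpwx hqwx (hEFne w w hw hw)
    have n26 : pw ≠ qz := cellne hpwx hqzx (hEFne w z hw hz)
    have n34 : pz ≠ qu := cellne hpzx hqux (hEFne z u hz hu)
    have n35 : pz ≠ qw := cellne hpzx hqwx (hEFne z w hz hw)
    have n36 : pz ≠ qz := cellne hpzx hqzx (hEFne z z hz hz)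
    set SIX : Finset (Fin 6 × Fin 7) := {pu, pw, pz, qu, qw, qz} with hSIX
    have hSIXcard : SIX.card = 6 := by
      rw [hSIX]
      rw [Finset.card_insert_of_notMem (by
        simp only [Finset.mem_insert, Finset.mem_singleton]
        push_neg
        exact ⟨n12, n13, n14, n15, n16⟩)]
      rw [Finset.card_insert_of_notMem (by
        simp only [Finset.mem_insert, Finset.mem_singleton]
        push_neg
        exact ⟨n23, n24, n25, n26⟩)]
      rw [Finset.card_insert_of_notMem (by
        simp only [Finset.mem_insert, Finset.mem_singleton]
        push_neg
        exact ⟨n34, n35, n36⟩)]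
      rw [Finset.card_insert_of_notMem (by
        simp only [Finset.mem_insert, Finset.mem_singleton]
        push_neg
        exact ⟨n45, n46⟩)]
      rw [Finset.card_insert_of_notMem (by
        simp only [Finset.mem_singleton]
        exact n56)]
      rw [Finset.card_singleton]
    have hSIXsub : SIX ⊆ RS ×ˢ X.NonS := by
      intro x hx
      rw [hSIX] at hx
      simp only [Finset.mem_insert, Finset.mem_singleton] at hx
      rw [Finset.mem_product]
      rcases hx with rfl | rfl | rfl | rfl | rfl | rfl
      · exact ⟨by rw [hRS]; simp, (X.mem_Xreg.mp hpu).2⟩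
      · exact ⟨by rw [hRS]; simp, (X.mem_Xreg.mp hpw).2⟩
      · exact ⟨by rw [hRS]; simp, (X.mem_Xreg.mp hpz).2⟩
      · exact ⟨by rw [hRS]; simp, (X.mem_Xreg.mp hqu).2⟩
      · exact ⟨by rw [hRS]; simp, (X.mem_Xreg.mp hqw).2⟩
      · exact ⟨by rw [hRS]; simp, (X.mem_Xreg.mp hqz).2⟩
    have hPRcard : (RS ×ˢ X.NonS).card = RS.card * 3 := by
      rw [Finset.card_product, hNS3]
    have hRSge2 : 2 ≤ RS.card := by
      have hh := Finset.card_le_card hSIXsub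
      rw [hSIXcard, hPRcard] at hh
      omega
    have hRSeq : RS.card = 2 := by omega
    -- d-extras avoid the rows of RS
    have hdXrow : ∀ q ∈ X.dXs, q.1 ∉ RS := by
      intro q0 hq0 hq0RS
      have hq0X : q0 ∈ X.Xreg := Finset.mem_of_mem_filter _ hq0
      have hq0D : X.M q0.1 q0.2 ∈ X.D := by
        unfold dXs at hq0
        exact (Finset.mem_filter.mp hq0).2
      have hq0PR : q0 ∈ RS ×ˢ X.NonS :=
        Finset.mem_product.mpr ⟨hq0RS, (X.mem_Xreg.mp hq0X).2⟩
      have hq0SIX : q0 ∉ SIX := by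
        intro hmem
        rw [hSIX] at hmem
        simp only [Finset.mem_insert, Finset.mem_singleton] at hmem
        have hEFmem : X.M q0.1 q0.2 ∈ X.EF := by
          rcases hmem with rfl | rfl | rfl | rfl | rfl | rfl
          · rw [hpux]; exact Finset.mem_union_left _ (X.Mi_NonS_mem_Eset hu)
          · rw [hpwx]; exact Finset.mem_union_left _ (X.Mi_NonS_mem_Eset hw)
          · rw [hpzx]; exact Finset.mem_union_left _ (X.Mi_NonS_mem_Eset hz)
          · rw [hqux]
            refine Finset.mem_union_right _ ?_
            have := X.flip.Mi_NonS_mem_Eset (u := u) (by rw [X.flip_NonS]; exact hu)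
            rw [X.flip_Eset] at this; exact this
          · rw [hqwx]
            refine Finset.mem_union_right _ ?_
            have := X.flip.Mi_NonS_mem_Eset (u := w) (by rw [X.flip_NonS]; exact hw)
            rw [X.flip_Eset] at this; exact this
          · rw [hqzx]
            refine Finset.mem_union_right _ ?_
            have := X.flip.Mi_NonS_mem_Eset (u := z) (by rw [X.flip_NonS]; exact hz)
            rw [X.flip_Eset] at this; exact this
        exact X.EF_not_D hEFmem hq0D
      have hins : insert q0 SIX ⊆ RS ×ˢ X.NonS := Finset.insert_subset hq0PR hSIXsub
      have hh := Finset.card_le_card hins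
      rw [Finset.card_insert_of_notMem hq0SIX, hSIXcard, hPRcard, hRSeq] at hh
      omega
    -- the columns of the d-extras
    set G := X.dXs.image Prod.snd with hG
    have hGsub : ∀ (v : Fin 7) (pv : Fin 6 × Fin 7),
        (∀ q ∈ X.dXs, q.1 = pv.1 ∨ q.2 = v ∨ q.2 = pv.2) → pv.1 ∈ RS →
        G ⊆ {v, pv.2} := by
      intro v pv hforce hpvRS γ hγ
      rw [hG, Finset.mem_image] at hγ
      obtain ⟨q0, hq0, rfl⟩ := hγ
      rcases hforce q0 hq0 with h | h | h
      · exact absurd (h ▸ hpvRS) (hdXrow q0 hq0)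
      · rw [h]; simp
      · rw [h]; simp
    have hGu : G ⊆ {u, pu.2} := hGsub u pu Fu.2 (by rw [hRS]; simp)
    have hGw : G ⊆ {w, pw.2} := hGsub w pw Fw.2 (by rw [hRS]; simp)
    have hGz : G ⊆ {z, pz.2} := hGsub z pz Fz.2 (by rw [hRS]; simp)
    have hG2 : G.card ≤ 2 := by
      calc G.card ≤ ({u, pu.2} : Finset (Fin 7)).card := Finset.card_le_card hGu
      _ ≤ 2 := Finset.card_insert_le _ _ |>.trans (by simp)
    -- each column of G carries at most two d-extras
    have hfibG : ∀ γ : Fin 7, (X.dXs.filter (fun q => q.2 = γ)).card ≤ 2 := by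
      intro γ
      have hmap : ∀ q ∈ X.dXs.filter (fun q => q.2 = γ), q.1 ∈ X.Rset \ RS := by
        intro q hq
        rw [Finset.mem_filter] at hq
        rw [Finset.mem_sdiff]
        exact ⟨(X.mem_Xreg.mp (Finset.mem_of_mem_filter _ hq.1)).1, hdXrow q hq.1⟩
      have hinj : Set.InjOn (Prod.fst : Fin 6 × Fin 7 → Fin 6) ↑(X.dXs.filter (fun q => q.2 = γ)) := by
        intro q1 h1 q2 h2 heq
        simp only [Finset.coe_filter, Set.mem_setOf_eq] at h1 h2
        exact Prod.ext heq (h1.2.trans h2.2.symm)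
      have hcard := Finset.card_le_card_of_injOn Prod.fst hmap hinj
      have hRsub : RS ⊆ X.Rset := by
        intro r hr
        rw [hRS] at hr
        simp only [Finset.mem_insert, Finset.mem_singleton] at hr
        rcases hr with rfl | rfl | rfl | rfl | rfl | rfl
        · exact (X.mem_Xreg.mp hpu).1
        · exact (X.mem_Xreg.mp hpw).1
        · exact (X.mem_Xreg.mp hpz).1
        · exact (X.mem_Xreg.mp hqu).1
        · exact (X.mem_Xreg.mp hqw).1
        · exact (X.mem_Xreg.mp hqz).1
      have : (X.Rset \ RS).card = 2 := by
        rw [Finset.card_sdiff_of_subset hRsub, X.card_Rset, hRSeq]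
      omega
    have hGge2 : 2 ≤ G.card := by
      have hfw : X.dXs.card = ∑ γ ∈ G, (X.dXs.filter (fun q => q.2 = γ)).card :=
        Finset.card_eq_sum_card_fiberwise (fun q hq => by
          rw [hG]; exact Finset.mem_image_of_mem _ hq)
      have hle := Finset.sum_le_card_nsmul G (fun γ => (X.dXs.filter (fun q => q.2 = γ)).card)
        2 (fun γ _ => hfibG γ)
      rw [← hfw, hdXeq] at hle
      simp only [smul_eq_mul] at hle
      omega
    have hmemG : ∀ (v : Fin 7) (pv : Fin 6 × Fin 7), G ⊆ {v, pv.2} → v ∈ G := by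
      intro v pv hsub
      by_contra hvG
      have hsing : G ⊆ {pv.2} := by
        intro γ hγ
        rcases Finset.mem_insert.mp (hsub hγ) with rfl | h
        · exact absurd hγ hvG
        · exact h
      have := Finset.card_le_card hsing
      rw [Finset.card_singleton] at this
      omega
    have huG : u ∈ G := hmemG u pu hGu
    have hwG : w ∈ G := hmemG w pw hGw
    have hzG : z ∈ G := hmemG z pz hGz
    have huwz : ({u, w, z} : Finset (Fin 7)) ⊆ G := by
      intro γ hγ
      simp only [Finset.mem_insert, Finset.mem_singleton] at hγ
      rcases hγ with rfl | rfl | rfl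
      · exact huG
      · exact hwG
      · exact hzG
    have hcard3 : ({u, w, z} : Finset (Fin 7)).card = 3 := by
      rw [Finset.card_insert_of_notMem (by simp [huw, huz]),
        Finset.card_insert_of_notMem (by simp [hwz]), Finset.card_singleton]
    have := Finset.card_le_card huwz
    omega


theorem no_good (X : Setup C) : False := by
  have h1 := X.card_Scols_ge
  have h2 := X.card_Scols_le
  interval_cases h : X.Scols.card
  · exact X.scols4 h
  · exact X.scols5 h

end Setup

end SharedRows

theorem shared_rows_le_two {C : Type*} [Fintype C] (M : Fin 6 → Fin 7 → C)
    (hM : MemM M) (hC : Fintype.card C = 19) (i k : Fin 6) (h : i ≠ k) :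
    Nat.card {c : C // freq M c = 2 ∧ (∃ j, M i j = c) ∧ (∃ j, M k j = c)} ≤ 2 := by
  classical
  by_contra hcon
  push_neg at hcon
  set P : C → Prop := fun c => freq M c = 2 ∧ (∃ j, M i j = c) ∧ (∃ j, M k j = c) with hP
  have hcard : 2 < (Finset.univ.filter P).card := by
    have := Nat.card_eq_fintype_card (α := {c : C // P c})
    rw [this, Fintype.card_subtype] at hcon
    exact hcon
  obtain ⟨c₁, c₂, c₃, hc₁, hc₂, hc₃, h12, h13, h23⟩ := Finset.two_lt_card_iff.mp hcard
  rw [Finset.mem_filter] at hc₁ hc₂ hc₃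
  -- for each colour of freq two in both rows, find its two cells
  have key : ∀ c : C, P c → ∃ aa bb : Fin 7, M i aa = c ∧ M k bb = c ∧
      (∀ r j, M r j = c → (r = i ∧ j = aa) ∨ (r = k ∧ j = bb)) := by
    intro c hc
    obtain ⟨hfreq, ⟨aa, ha⟩, ⟨bb, hb⟩⟩ := hc
    refine ⟨aa, bb, ha, hb, ?_⟩
    unfold freq at hfreq
    have hfin : (Finset.univ.filter (fun x : Fin 6 × Fin 7 => M x.1 x.2 = c)).card = 2 := by
      have := Nat.card_eq_fintype_card (α := {x : Fin 6 × Fin 7 // M x.1 x.2 = c})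
      rw [this, Fintype.card_subtype] at hfreq
      exact hfreq
    have hmem : ({((i, aa) : Fin 6 × Fin 7), (k, bb)} : Finset (Fin 6 × Fin 7)) ⊆
        Finset.univ.filter (fun x : Fin 6 × Fin 7 => M x.1 x.2 = c) := by
      intro x hx
      simp only [Finset.mem_insert, Finset.mem_singleton] at hx
      rcases hx with rfl | rfl <;> simp [ha, hb]
    have hne : ((i, aa) : Fin 6 × Fin 7) ≠ (k, bb) := by
      intro hh; exact h (congrArg Prod.fst hh)
    have hcard2 : ({((i, aa) : Fin 6 × Fin 7), (k, bb)} : Finset (Fin 6 × Fin 7)).card = 2 := by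
      simp [hne]
    have := Finset.eq_of_subset_of_card_le hmem (by omega)
    intro r j hrj
    have : ((r, j) : Fin 6 × Fin 7) ∈
        ({((i, aa) : Fin 6 × Fin 7), (k, bb)} : Finset (Fin 6 × Fin 7)) := by
      rw [this]; simp [hrj]
    simp only [Finset.mem_insert, Finset.mem_singleton, Prod.mk.injEq] at this
    tauto
  obtain ⟨a₁, b₁, ha1, hb1, hk1⟩ := key c₁ hc₁.2
  obtain ⟨a₂, b₂, ha2, hb2, hk2⟩ := key c₂ hc₂.2
  obtain ⟨a₃, b₃, ha3, hb3, hk3⟩ := key c₃ hc₃.2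
  obtain ⟨hrow, hcol, hlink⟩ := hM
  refine SharedRows.Setup.no_good
    { M := M, hrow := hrow, hcol := hcol, hlink := hlink, hC := hC,
      i := i, k := k, hik := h,
      c := ![c₁, c₂, c₃], a := ![a₁, a₂, a₃], b := ![b₁, b₂, b₃],
      hcinj := ?_, hca := ?_, hcb := ?_, hcell := ?_ }
  · intro s t hst
    fin_cases s <;> fin_cases t <;> simp_all
  · intro t
    fin_cases t
    · simpa using ha1
    · simpa using ha2
    · simpa using ha3
  · intro t
    fin_cases t
    · simpa using hb1
    · simpa using hb2
    · simpa using hb3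
  · intro t r j hrj
    fin_cases t <;> simp only [Matrix.cons_val_zero, Matrix.cons_val_one, Matrix.head_cons,
      Matrix.cons_val_two, Matrix.tail_cons] at hrj ⊢
    · exact hk1 r j hrj
    · exact hk2 r j hrj
    · exact hk3 r j hrj

end
end
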